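/- arXiv:1902.00434 — 6 statements merged into one kernel-verified Lean document; each statement's English description precedes it below -/
import Mathlib

section
/- The generalized sliced Wasserstein distance with an injective generalized Radon transform is a metric (the paper's Proposition): if for all Borel probability measures μ, ν on ℝ^d, g(·,θ)_#μ = g(·,θ)_#ν for σ-almost every θ implies μ = ν, then GSW_p is a metric on the set of Borel probability measures on ℝ^d with finite p-th moment under every slice: it is non-negative, symmetric, satisfies the triangle inequality, and GSW_p(μ,ν) = 0 if and only if μ = ν. -/
open MeasureTheory ENNReal

/-- The `p`-Wasserstein distance between two measures, defined as the infimum over all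
couplings (probability measures on the product whose marginals are `μ` and `ν`) of
`(∫ d(x,y)^p dγ)^(1/p)`. -/
noncomputable def wassersteinDist {X : Type*} [MeasurableSpace X] [PseudoMetricSpace X]
    (p : ℝ) (μ ν : Measure X) : ℝ≥0∞ :=
  (⨅ γ ∈ {γ : Measure (X × X) | IsProbabilityMeasure γ ∧
      γ.map Prod.fst = μ ∧ γ.map Prod.snd = ν},
    ∫⁻ q, ENNReal.ofReal (dist q.1 q.2 ^ p) ∂γ) ^ (1 / p)

/-- The generalized sliced `p`-Wasserstein distance associated with the defining function `g`
and the measure `σ` on the parameter space. -/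
noncomputable def GSW {d : ℕ} {Θ : Type*} [MeasurableSpace Θ] (p : ℝ) (σ : Measure Θ)
    (g : (Fin d → ℝ) → Θ → ℝ) (μ ν : Measure (Fin d → ℝ)) : ℝ≥0∞ :=
  (∫⁻ θ, (wassersteinDist p (μ.map fun x => g x θ) (ν.map fun x => g x θ)) ^ p ∂σ) ^ (1 / p)

set_option linter.unusedSectionVars false

namespace GSWProof

open MeasureTheory ENNReal ProbabilityTheory Set Filter Metric

variable {X : Type*} [MeasurableSpace X] [PseudoMetricSpace X]

def cpl (μ ν : Measure X) : Set (Measure (X × X)) :=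
  {γ : Measure (X × X) | IsProbabilityMeasure γ ∧
      γ.map Prod.fst = μ ∧ γ.map Prod.snd = ν}

noncomputable def wCost (p : ℝ) (γ : Measure (X × X)) : ℝ≥0∞ :=
  ∫⁻ q, ENNReal.ofReal (dist q.1 q.2 ^ p) ∂γ

lemma wassersteinDist_eq (p : ℝ) (μ ν : Measure X) :
    wassersteinDist p μ ν = (⨅ γ ∈ cpl μ ν, wCost p γ) ^ (1 / p) := rfl

variable [OpensMeasurableSpace X] [SecondCountableTopology X]

lemma measurable_costFun {p : ℝ} (hp : 0 ≤ p) :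
    Measurable fun q : X × X => ENNReal.ofReal (dist q.1 q.2 ^ p) :=
  ENNReal.measurable_ofReal.comp ((Real.continuous_rpow_const hp).measurable.comp
    (measurable_fst.dist measurable_snd))

lemma prod_mem_cpl (μ ν : Measure X) [IsProbabilityMeasure μ] [IsProbabilityMeasure ν] :
    μ.prod ν ∈ cpl μ ν := by
  refine ⟨inferInstance, ?_, ?_⟩
  · rw [Measure.map_fst_prod, measure_univ, one_smul]
  · rw [Measure.map_snd_prod, measure_univ, one_smul]

lemma iInf_rpow_pos {ι : Sort*} (f : ι → ℝ≥0∞) {q : ℝ} (hq : 0 < q) :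
    (⨅ i, f i) ^ q = ⨅ i, f i ^ q := by
  refine le_antisymm (le_iInf fun i => ENNReal.rpow_le_rpow (iInf_le _ i) hq.le) ?_
  have h1 : (⨅ i, f i ^ q) = (((⨅ i, f i ^ q) ^ (1 / q)) ^ q) := by
    rw [← ENNReal.rpow_mul, one_div, inv_mul_cancel₀ hq.ne', ENNReal.rpow_one]
  rw [h1]
  refine ENNReal.rpow_le_rpow (le_iInf fun i => ?_) hq.le
  calc (⨅ i, f i ^ q) ^ (1 / q) ≤ (f i ^ q) ^ (1 / q) :=
        ENNReal.rpow_le_rpow (iInf_le _ i) (by positivity)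
    _ = f i := by
        rw [← ENNReal.rpow_mul, mul_one_div, div_self hq.ne', ENNReal.rpow_one]

lemma wassersteinDist_eq' {p : ℝ} (hp : 0 < p) (μ ν : Measure X) :
    wassersteinDist p μ ν = ⨅ γ : cpl μ ν, (wCost p (γ : Measure (X × X))) ^ (1 / p) := by
  rw [wassersteinDist_eq, iInf_subtype', iInf_rpow_pos _ (by positivity : (0:ℝ) < 1 / p)]

lemma wassersteinDist_le {p : ℝ} (hp : 0 < p) {μ ν : Measure X} {γ : Measure (X × X)}
    (hγ : γ ∈ cpl μ ν) : wassersteinDist p μ ν ≤ (wCost p γ) ^ (1 / p) := by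
  rw [wassersteinDist_eq' hp]
  exact iInf_le _ (⟨γ, hγ⟩ : cpl μ ν)

lemma swap_mem_cpl {μ ν : Measure X} {γ : Measure (X × X)} (hγ : γ ∈ cpl μ ν) :
    γ.map Prod.swap ∈ cpl ν μ := by
  haveI := hγ.1
  refine ⟨Measure.isProbabilityMeasure_map measurable_swap.aemeasurable, ?_, ?_⟩
  · rw [Measure.map_map measurable_fst measurable_swap]
    exact hγ.2.2
  · rw [Measure.map_map measurable_snd measurable_swap]
    exact hγ.2.1

lemma wCost_map_swap {p : ℝ} (hp : 0 ≤ p) (γ : Measure (X × X)) :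
    wCost p (γ.map Prod.swap) = wCost p γ := by
  rw [wCost, lintegral_map (measurable_costFun hp) measurable_swap]
  simp only [wCost, Prod.fst_swap, Prod.snd_swap, dist_comm]

lemma wassersteinDist_comm {p : ℝ} (hp : 0 < p) (μ ν : Measure X) :
    wassersteinDist p μ ν = wassersteinDist p ν μ := by
  have key : ∀ α β : Measure X, wassersteinDist p α β ≤ wassersteinDist p β α := by
    intro α β
    rw [wassersteinDist_eq' hp β α]
    refine le_iInf fun γ => ?_
    calc wassersteinDist p α β ≤ (wCost p ((γ : Measure (X × X)).map Prod.swap)) ^ (1 / p) :=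
          wassersteinDist_le hp (swap_mem_cpl γ.2)
      _ = (wCost p (γ : Measure (X × X))) ^ (1 / p) := by rw [wCost_map_swap hp.le]
  exact le_antisymm (key μ ν) (key ν μ)

lemma wassersteinDist_self {p : ℝ} (hp : 0 < p) (μ : Measure X) [IsProbabilityMeasure μ] :
    wassersteinDist p μ μ = 0 := by
  have hdiag : Measurable fun x : X => (x, x) := measurable_id.prodMk measurable_id
  have hmem : μ.map (fun x => (x, x)) ∈ cpl μ μ := by
    refine ⟨Measure.isProbabilityMeasure_map hdiag.aemeasurable, ?_, ?_⟩
    · rw [Measure.map_map measurable_fst hdiag]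
      exact Measure.map_id
    · rw [Measure.map_map measurable_snd hdiag]
      exact Measure.map_id
  refine le_antisymm ?_ zero_le
  have h0 : wCost p (μ.map fun x => (x, x)) = 0 := by
    rw [wCost, lintegral_map (measurable_costFun hp.le) hdiag]
    simp [dist_self, Real.zero_rpow hp.ne']
  calc wassersteinDist p μ μ ≤ (wCost p (μ.map fun x => (x, x))) ^ (1 / p) :=
        wassersteinDist_le hp hmem
    _ = 0 := by rw [h0, ENNReal.zero_rpow_of_pos (by positivity)]

variable [BorelSpace X]

lemma le_on_closed_of_iInf_zero {p : ℝ} (hp : 0 < p) {μ ν : Measure X}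
    [IsProbabilityMeasure μ] [IsProbabilityMeasure ν]
    (h : (⨅ γ ∈ cpl μ ν, wCost p γ) = 0) {F : Set X} (hF : IsClosed F) : μ F ≤ ν F := by
  have step : ∀ δ : ℝ, 0 < δ → μ F ≤ ν (cthickening δ F) := by
    intro δ hδ
    refine ENNReal.le_of_forall_pos_le_add fun ε hε hν => ?_
    have hδp : (0:ℝ≥0∞) < ENNReal.ofReal (δ ^ p) :=
      ENNReal.ofReal_pos.2 (Real.rpow_pos_of_pos hδ p)
    have hpos : (0:ℝ≥0∞) < ENNReal.ofReal (δ ^ p) * ε :=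
      ENNReal.mul_pos hδp.ne' (by exact_mod_cast hε.ne')
    have hlt : (⨅ γ ∈ cpl μ ν, wCost p γ) < ENNReal.ofReal (δ ^ p) * ε := h ▸ hpos
    rw [iInf_lt_iff] at hlt
    obtain ⟨γ, hlt⟩ := hlt
    rw [iInf_lt_iff] at hlt
    obtain ⟨hγ, hcost⟩ := hlt
    haveI := hγ.1
    have hsub : (Prod.fst ⁻¹' F : Set (X × X)) ⊆
        (Prod.snd ⁻¹' cthickening δ F) ∪
          {q : X × X | ENNReal.ofReal (δ ^ p) ≤ ENNReal.ofReal (dist q.1 q.2 ^ p)} := by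
      rintro ⟨x, y⟩ hx
      by_cases hxy : dist x y ≤ δ
      · exact Or.inl (Metric.mem_cthickening_of_dist_le y x δ F hx (by rwa [dist_comm]))
      · exact Or.inr (ENNReal.ofReal_le_ofReal
          (Real.rpow_le_rpow hδ.le (le_of_not_ge hxy) hp.le))
    have hmark : γ {q : X × X |
        ENNReal.ofReal (δ ^ p) ≤ ENNReal.ofReal (dist q.1 q.2 ^ p)} ≤ ε := by
      have h1 := mul_meas_ge_le_lintegral₀ (μ := γ)
        (measurable_costFun (X := X) hp.le).aemeasurable (ENNReal.ofReal (δ ^ p))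
      rw [wCost] at hcost
      have h2 : ENNReal.ofReal (δ ^ p) * γ {q : X × X |
          ENNReal.ofReal (δ ^ p) ≤ ENNReal.ofReal (dist q.1 q.2 ^ p)}
          < ENNReal.ofReal (δ ^ p) * ε := lt_of_le_of_lt h1 hcost
      exact le_of_lt ((ENNReal.mul_lt_mul_iff_right hδp.ne' ENNReal.ofReal_ne_top).mp h2)
    calc μ F = γ (Prod.fst ⁻¹' F) := by
          rw [← hγ.2.1, Measure.map_apply measurable_fst hF.measurableSet]
      _ ≤ γ (Prod.snd ⁻¹' cthickening δ F) +
            γ {q : X × X | ENNReal.ofReal (δ ^ p) ≤ ENNReal.ofReal (dist q.1 q.2 ^ p)} :=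
          (measure_mono hsub).trans (measure_union_le _ _)
      _ ≤ ν (cthickening δ F) + ε := by
          refine add_le_add (le_of_eq ?_) hmark
          rw [← hγ.2.2,
            Measure.map_apply measurable_snd Metric.isClosed_cthickening.measurableSet]
  have htend : Filter.Tendsto (fun r => ν (cthickening r F)) (nhdsWithin 0 (Set.Ioi (0:ℝ)))
      (nhds (ν F)) :=
    (tendsto_measure_cthickening_of_isClosed
      ⟨1, one_pos, measure_ne_top ν _⟩ hF).mono_left nhdsWithin_le_nhds
  exact ge_of_tendsto htend (eventually_nhdsWithin_of_forall fun r hr => step r hr)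

lemma eq_of_wdist_zero {p : ℝ} (hp : 0 < p) {μ ν : Measure X}
    [IsProbabilityMeasure μ] [IsProbabilityMeasure ν]
    (h : wassersteinDist p μ ν = 0) : μ = ν := by
  have hiota : ∀ {α β : Measure X}, wassersteinDist p α β = 0 →
      (⨅ γ ∈ cpl α β, wCost p γ) = 0 := by
    intro α β hαβ
    rw [wassersteinDist_eq] at hαβ
    rcases ENNReal.rpow_eq_zero_iff.mp hαβ with ⟨h0, _⟩ | ⟨_, hneg⟩
    · exact h0
    · exfalso
      have : (0:ℝ) < 1 / p := by positivity
      linarith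
  have h' : wassersteinDist p ν μ = 0 := by rw [wassersteinDist_comm hp]; exact h
  refine ext_of_generate_finite {s : Set X | IsClosed s} ?_ ?_
    (fun s hs => le_antisymm (le_on_closed_of_iInf_zero hp (hiota h) hs)
      (le_on_closed_of_iInf_zero hp (hiota h') hs)) ?_
  · rw [BorelSpace.measurable_eq (α := X), borel_eq_generateFrom_isClosed]
  · exact fun s hs t ht _ => hs.inter ht
  · simp

section Glue

lemma glue {p : ℝ} (hp : 1 ≤ p) {μ1 μ2 μ3 : Measure ℝ}
    [IsProbabilityMeasure μ2]
    {γ η : Measure (ℝ × ℝ)} (hγ : γ ∈ cpl μ1 μ2) (hη : η ∈ cpl μ2 μ3) :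
    wassersteinDist p μ1 μ3 ≤ (wCost p γ) ^ (1 / p) + (wCost p η) ^ (1 / p) := by
  have hp0 : (0:ℝ) < p := lt_of_lt_of_le one_pos hp
  haveI := hγ.1; haveI := hη.1
  set γ' : Measure (ℝ × ℝ) := γ.map Prod.swap with hγ'def
  haveI : IsProbabilityMeasure γ' := Measure.isProbabilityMeasure_map measurable_swap.aemeasurable
  have hfst : γ'.fst = μ2 := by
    rw [hγ'def, Measure.fst_map_swap]; exact hγ.2.2
  have hηfst : η.fst = μ2 := hη.2.1
  set κ : Kernel ℝ (ℝ × ℝ) := γ'.condKernel ×ₖ η.condKernel with hκdef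
  haveI : IsMarkovKernel κ := by rw [hκdef]; infer_instance
  set m : Measure (ℝ × (ℝ × ℝ)) := μ2 ⊗ₘ κ with hmdef
  set ξ : Measure (ℝ × ℝ) := m.map (fun q => q.2) with hξdef
  -- the marginals of ξ
  have hm1 : ξ.map Prod.fst = μ1 := by
    rw [hξdef, Measure.map_map measurable_fst measurable_snd]
    ext s hs
    have hms : MeasurableSet ((Prod.fst ∘ Prod.snd : ℝ × (ℝ × ℝ) → ℝ) ⁻¹' s) :=
      (measurable_fst.comp measurable_snd) hs
    rw [Measure.map_apply (measurable_fst.comp measurable_snd) hs, hmdef,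
      Measure.compProd_apply hms]
    have hκeval : ∀ y : ℝ,
        κ y (Prod.mk y ⁻¹' ((Prod.fst ∘ Prod.snd : ℝ × (ℝ × ℝ) → ℝ) ⁻¹' s))
          = γ'.condKernel y s := by
      intro y
      have hpre : (Prod.mk y ⁻¹' ((Prod.fst ∘ Prod.snd : ℝ × (ℝ × ℝ) → ℝ) ⁻¹' s)
          : Set (ℝ × ℝ)) = Prod.fst ⁻¹' s := rfl
      rw [hpre, hκdef, Kernel.prod_apply, ← Set.prod_univ, Measure.prod_prod,
        measure_univ, mul_one]
    simp_rw [hκeval]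
    have h2 : ∫⁻ y, γ'.condKernel y s ∂μ2 = γ' (Prod.snd ⁻¹' s) := by
      have hcp := Measure.disintegrate γ' γ'.condKernel
      conv_rhs => rw [← hcp]
      rw [Measure.compProd_apply (measurable_snd hs), hfst]
      have hpre : ∀ a : ℝ, (Prod.mk a ⁻¹' (Prod.snd ⁻¹' s) : Set ℝ) = s := fun a => rfl
      simp_rw [hpre]
    rw [h2, hγ'def, Measure.map_apply measurable_swap (measurable_snd hs)]
    have hpre2 : (Prod.swap ⁻¹' (Prod.snd ⁻¹' s) : Set (ℝ × ℝ)) = Prod.fst ⁻¹' s := rfl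
    rw [hpre2, ← Measure.map_apply measurable_fst hs, hγ.2.1]
  have hm3 : ξ.map Prod.snd = μ3 := by
    rw [hξdef, Measure.map_map measurable_snd measurable_snd]
    ext s hs
    have hms : MeasurableSet ((Prod.snd ∘ Prod.snd : ℝ × (ℝ × ℝ) → ℝ) ⁻¹' s) :=
      (measurable_snd.comp measurable_snd) hs
    rw [Measure.map_apply (measurable_snd.comp measurable_snd) hs, hmdef,
      Measure.compProd_apply hms]
    have hκeval : ∀ y : ℝ,
        κ y (Prod.mk y ⁻¹' ((Prod.snd ∘ Prod.snd : ℝ × (ℝ × ℝ) → ℝ) ⁻¹' s))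
          = η.condKernel y s := by
      intro y
      have hpre : (Prod.mk y ⁻¹' ((Prod.snd ∘ Prod.snd : ℝ × (ℝ × ℝ) → ℝ) ⁻¹' s)
          : Set (ℝ × ℝ)) = Prod.snd ⁻¹' s := rfl
      rw [hpre, hκdef, Kernel.prod_apply, ← Set.univ_prod, Measure.prod_prod,
        measure_univ, one_mul]
    simp_rw [hκeval]
    have h2 : ∫⁻ y, η.condKernel y s ∂μ2 = η (Prod.snd ⁻¹' s) := by
      have hcp := Measure.disintegrate η η.condKernel
      conv_rhs => rw [← hcp]
      rw [Measure.compProd_apply (measurable_snd hs), hηfst]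
      have hpre : ∀ a : ℝ, (Prod.mk a ⁻¹' (Prod.snd ⁻¹' s) : Set ℝ) = s := fun a => rfl
      simp_rw [hpre]
    rw [h2, ← Measure.map_apply measurable_snd hs, hη.2.2]
  have hmem : ξ ∈ cpl μ1 μ3 :=
    ⟨by rw [hξdef]; exact Measure.isProbabilityMeasure_map measurable_snd.aemeasurable, hm1, hm3⟩
  -- cost estimates
  have hFm : Measurable fun q : ℝ × (ℝ × ℝ) => ENNReal.ofReal (dist q.2.1 q.1) :=
    ENNReal.measurable_ofReal.comp ((measurable_fst.comp measurable_snd).dist measurable_fst)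
  have hGm : Measurable fun q : ℝ × (ℝ × ℝ) => ENNReal.ofReal (dist q.1 q.2.2) :=
    ENNReal.measurable_ofReal.comp (measurable_fst.dist (measurable_snd.comp measurable_snd))
  have hcost1 : wCost p ξ ≤
      ∫⁻ q, (ENNReal.ofReal (dist q.2.1 q.1) + ENNReal.ofReal (dist q.1 q.2.2)) ^ p ∂m := by
    rw [wCost, hξdef, lintegral_map (measurable_costFun hp0.le) measurable_snd]
    refine lintegral_mono fun q => ?_
    rw [← ENNReal.ofReal_rpow_of_nonneg dist_nonneg hp0.le]
    refine ENNReal.rpow_le_rpow ?_ hp0.le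
    rw [← ENNReal.ofReal_add dist_nonneg dist_nonneg]
    exact ENNReal.ofReal_le_ofReal (dist_triangle _ _ _)
  have hF : ∫⁻ q, (ENNReal.ofReal (dist q.2.1 q.1)) ^ p ∂m = wCost p γ := by
    have hfm' : Measurable fun q : ℝ × ℝ => ENNReal.ofReal (dist q.2 q.1 ^ p) :=
      ENNReal.measurable_ofReal.comp ((Real.continuous_rpow_const hp0.le).measurable.comp
        (measurable_snd.dist measurable_fst))
    have hFq : Measurable fun q : ℝ × (ℝ × ℝ) => ENNReal.ofReal (dist q.2.1 q.1) ^ p :=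
      ENNReal.continuous_rpow_const.measurable.comp hFm
    rw [hmdef, Measure.lintegral_compProd hFq]
    have hinner : ∀ y : ℝ, ∫⁻ bc : ℝ × ℝ, (ENNReal.ofReal (dist bc.1 y)) ^ p ∂(κ y)
        = ∫⁻ x, ENNReal.ofReal (dist x y ^ p) ∂(γ'.condKernel y) := by
      intro y
      have hmy : Measurable fun bc : ℝ × ℝ => ENNReal.ofReal (dist bc.1 y) ^ p :=
        ENNReal.continuous_rpow_const.measurable.comp
          (ENNReal.measurable_ofReal.comp (measurable_fst.dist measurable_const))
      rw [hκdef, Kernel.lintegral_prod _ _ _ hmy]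
      simp [lintegral_const, measure_univ, mul_one,
        ENNReal.ofReal_rpow_of_nonneg dist_nonneg hp0.le]
    simp_rw [hinner]
    rw [← hfst]
    have hcomp := Measure.lintegral_compProd (μ := γ'.fst) (κ := γ'.condKernel)
      (f := fun q : ℝ × ℝ => ENNReal.ofReal (dist q.2 q.1 ^ p)) hfm'
    rw [Measure.disintegrate γ' γ'.condKernel] at hcomp
    dsimp only at hcomp
    rw [← hcomp, hγ'def, lintegral_map hfm' measurable_swap]
    simp only [Prod.fst_swap, Prod.snd_swap]
    rfl
  have hG : ∫⁻ q, (ENNReal.ofReal (dist q.1 q.2.2)) ^ p ∂m = wCost p η := by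
    have hfm' : Measurable fun q : ℝ × ℝ => ENNReal.ofReal (dist q.1 q.2 ^ p) :=
      ENNReal.measurable_ofReal.comp ((Real.continuous_rpow_const hp0.le).measurable.comp
        (measurable_fst.dist measurable_snd))
    have hGq : Measurable fun q : ℝ × (ℝ × ℝ) => ENNReal.ofReal (dist q.1 q.2.2) ^ p :=
      ENNReal.continuous_rpow_const.measurable.comp hGm
    rw [hmdef, Measure.lintegral_compProd hGq]
    have hinner : ∀ y : ℝ, ∫⁻ bc : ℝ × ℝ, (ENNReal.ofReal (dist y bc.2)) ^ p ∂(κ y)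
        = ∫⁻ z, ENNReal.ofReal (dist y z ^ p) ∂(η.condKernel y) := by
      intro y
      have hmy : Measurable fun bc : ℝ × ℝ => ENNReal.ofReal (dist y bc.2) ^ p :=
        ENNReal.continuous_rpow_const.measurable.comp
          (ENNReal.measurable_ofReal.comp (measurable_const.dist measurable_snd))
      rw [hκdef, Kernel.lintegral_prod _ _ _ hmy]
      simp [lintegral_const, measure_univ, mul_one,
        ENNReal.ofReal_rpow_of_nonneg dist_nonneg hp0.le]
    simp_rw [hinner]
    rw [← hηfst]
    have hcomp := Measure.lintegral_compProd (μ := η.fst) (κ := η.condKernel)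
      (f := fun q : ℝ × ℝ => ENNReal.ofReal (dist q.1 q.2 ^ p)) hfm'
    rw [Measure.disintegrate η η.condKernel] at hcomp
    dsimp only at hcomp
    rw [← hcomp]
    rfl
  -- put everything together
  calc wassersteinDist p μ1 μ3 ≤ (wCost p ξ) ^ (1 / p) := wassersteinDist_le hp0 hmem
    _ ≤ (∫⁻ q, ((fun q : ℝ × (ℝ × ℝ) => ENNReal.ofReal (dist q.2.1 q.1))
          + fun q : ℝ × (ℝ × ℝ) => ENNReal.ofReal (dist q.1 q.2.2)) q ^ p ∂m) ^ (1 / p) := by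
        refine ENNReal.rpow_le_rpow ?_ (by positivity)
        simpa using hcost1
    _ ≤ (∫⁻ q, (ENNReal.ofReal (dist q.2.1 q.1)) ^ p ∂m) ^ (1 / p)
          + (∫⁻ q, (ENNReal.ofReal (dist q.1 q.2.2)) ^ p ∂m) ^ (1 / p) :=
        ENNReal.lintegral_Lp_add_le hFm.aemeasurable hGm.aemeasurable hp
    _ = (wCost p γ) ^ (1 / p) + (wCost p η) ^ (1 / p) := by rw [hF, hG]

lemma wdist_triangle {p : ℝ} (hp : 1 ≤ p) (μ1 μ2 μ3 : Measure ℝ)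
    [IsProbabilityMeasure μ1] [IsProbabilityMeasure μ2] [IsProbabilityMeasure μ3] :
    wassersteinDist p μ1 μ3 ≤ wassersteinDist p μ1 μ2 + wassersteinDist p μ2 μ3 := by
  have hp0 : (0:ℝ) < p := lt_of_lt_of_le one_pos hp
  rw [wassersteinDist_eq' hp0 μ1 μ2, wassersteinDist_eq' hp0 μ2 μ3, ENNReal.iInf_add]
  refine le_iInf fun γ => ?_
  rw [ENNReal.add_iInf]
  refine le_iInf fun η => ?_
  exact glue hp γ.2 η.2

end Glue

end GSWProof

/-- If the generalized Radon transform associated with `g` is injective on probability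
measures, then the generalized sliced `p`-Wasserstein distance is a metric on the set of
Borel probability measures on `ℝ^d` with finite `p`-th moment under every slice: it is
non-negative, symmetric, satisfies the triangle inequality, and vanishes exactly on the
diagonal. -/
theorem GSW_metric {d : ℕ} {Θ : Type*} [MeasurableSpace Θ]
    (p : ℝ) (hp : 1 ≤ p)
    (σ : Measure Θ) [IsFiniteMeasure σ] (hσ : σ ≠ 0)
    (g : (Fin d → ℝ) → Θ → ℝ) (hg : Measurable (Function.uncurry g))
    (hinj : ∀ μ ν : Measure (Fin d → ℝ), IsProbabilityMeasure μ → IsProbabilityMeasure ν →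
      (∀ᵐ θ ∂σ, μ.map (fun x => g x θ) = ν.map (fun x => g x θ)) → μ = ν)
    (hmeas : ∀ μ ν : Measure (Fin d → ℝ), IsProbabilityMeasure μ → IsProbabilityMeasure ν →
      (∀ θ : Θ, ∫⁻ x, ENNReal.ofReal (|g x θ| ^ p) ∂μ < ∞) →
      (∀ θ : Θ, ∫⁻ x, ENNReal.ofReal (|g x θ| ^ p) ∂ν < ∞) →
      Measurable fun θ : Θ =>
        wassersteinDist p (μ.map fun x => g x θ) (ν.map fun x => g x θ)) :
    (∀ μ ν : Measure (Fin d → ℝ), IsProbabilityMeasure μ → IsProbabilityMeasure ν →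
      (∀ θ : Θ, ∫⁻ x, ENNReal.ofReal (|g x θ| ^ p) ∂μ < ∞) →
      (∀ θ : Θ, ∫⁻ x, ENNReal.ofReal (|g x θ| ^ p) ∂ν < ∞) →
      0 ≤ GSW p σ g μ ν ∧ GSW p σ g μ ν = GSW p σ g ν μ ∧
        (GSW p σ g μ ν = 0 ↔ μ = ν)) ∧
    (∀ μ₁ μ₂ μ₃ : Measure (Fin d → ℝ),
      IsProbabilityMeasure μ₁ → IsProbabilityMeasure μ₂ → IsProbabilityMeasure μ₃ →
      (∀ θ : Θ, ∫⁻ x, ENNReal.ofReal (|g x θ| ^ p) ∂μ₁ < ∞) →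
      (∀ θ : Θ, ∫⁻ x, ENNReal.ofReal (|g x θ| ^ p) ∂μ₂ < ∞) →
      (∀ θ : Θ, ∫⁻ x, ENNReal.ofReal (|g x θ| ^ p) ∂μ₃ < ∞) →
      GSW p σ g μ₁ μ₃ ≤ GSW p σ g μ₁ μ₂ + GSW p σ g μ₂ μ₃) := by
  have hp0 : (0:ℝ) < p := lt_of_lt_of_le one_pos hp
  have hgθ : ∀ θ : Θ, Measurable fun x : Fin d → ℝ => g x θ :=
    fun θ => hg.comp (measurable_id.prodMk measurable_const)
  constructor
  · intro μ ν hμ hν hμf hνf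
    haveI := hμ; haveI := hν
    have hμθ : ∀ θ, IsProbabilityMeasure (μ.map fun x => g x θ) :=
      fun θ => Measure.isProbabilityMeasure_map (hgθ θ).aemeasurable
    have hνθ : ∀ θ, IsProbabilityMeasure (ν.map fun x => g x θ) :=
      fun θ => Measure.isProbabilityMeasure_map (hgθ θ).aemeasurable
    refine ⟨zero_le, ?_, ?_, ?_⟩
    · unfold GSW
      congr 1
      exact lintegral_congr fun θ => by rw [GSWProof.wassersteinDist_comm hp0]
    · intro h0
      refine hinj μ ν hμ hν ?_
      have hm := hmeas μ ν hμ hν hμf hνf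
      have hint : ∫⁻ θ, (wassersteinDist p (μ.map fun x => g x θ)
          (ν.map fun x => g x θ)) ^ p ∂σ = 0 := by
        unfold GSW at h0
        rcases ENNReal.rpow_eq_zero_iff.mp h0 with ⟨h1, _⟩ | ⟨_, hneg⟩
        · exact h1
        · exfalso
          have : (0:ℝ) < 1 / p := by positivity
          linarith
      have hae := (lintegral_eq_zero_iff'
        ((ENNReal.continuous_rpow_const.measurable.comp hm).aemeasurable)).mp hint
      filter_upwards [hae] with θ hθ
      haveI := hμθ θ; haveI := hνθ θ
      have hW : wassersteinDist p (μ.map fun x => g x θ) (ν.map fun x => g x θ) = 0 := by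
        have hθ' : (wassersteinDist p (μ.map fun x => g x θ)
            (ν.map fun x => g x θ)) ^ p = 0 := hθ
        rcases ENNReal.rpow_eq_zero_iff.mp hθ' with ⟨h1, _⟩ | ⟨_, hneg⟩
        · exact h1
        · linarith
      exact GSWProof.eq_of_wdist_zero hp0 hW
    · rintro rfl
      unfold GSW
      have hz : ∀ θ : Θ, (wassersteinDist p (μ.map fun x => g x θ)
          (μ.map fun x => g x θ)) ^ p = (0:ℝ≥0∞) := by
        intro θ
        haveI := hμθ θ
        rw [GSWProof.wassersteinDist_self hp0, ENNReal.zero_rpow_of_pos hp0]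
      simp only [hz]
      rw [lintegral_zero, ENNReal.zero_rpow_of_pos (by positivity)]
  · intro μ1 μ2 μ3 h1 h2 h3 hf1 hf2 hf3
    haveI := h1; haveI := h2; haveI := h3
    have h12 := hmeas μ1 μ2 h1 h2 hf1 hf2
    have h23 := hmeas μ2 μ3 h2 h3 hf2 hf3
    unfold GSW
    calc (∫⁻ θ, (wassersteinDist p (μ1.map fun x => g x θ)
          (μ3.map fun x => g x θ)) ^ p ∂σ) ^ (1 / p)
        ≤ (∫⁻ θ, ((fun θ => wassersteinDist p (μ1.map fun x => g x θ) (μ2.map fun x => g x θ))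
            + fun θ => wassersteinDist p (μ2.map fun x => g x θ) (μ3.map fun x => g x θ)) θ
            ^ p ∂σ) ^ (1 / p) := by
          refine ENNReal.rpow_le_rpow (lintegral_mono fun θ => ?_) (by positivity)
          refine ENNReal.rpow_le_rpow ?_ hp0.le
          haveI : IsProbabilityMeasure (μ1.map fun x => g x θ) :=
            Measure.isProbabilityMeasure_map (hgθ θ).aemeasurable
          haveI : IsProbabilityMeasure (μ2.map fun x => g x θ) :=
            Measure.isProbabilityMeasure_map (hgθ θ).aemeasurable
          haveI : IsProbabilityMeasure (μ3.map fun x => g x θ) :=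
            Measure.isProbabilityMeasure_map (hgθ θ).aemeasurable
          simpa using GSWProof.wdist_triangle hp _ _ _
      _ ≤ _ := ENNReal.lintegral_Lp_add_le h12.aemeasurable h23.aemeasurable hp
end

section
/- The maximum generalized sliced Wasserstein distance with an injective generalized Radon transform is a metric (the paper's Proposition): if for all Borel probability measures μ, ν on ℝ^d, g(·,θ)_#μ = g(·,θ)_#ν for every θ ∈ Ω_θ implies μ = ν, then max-GSW_p is a metric on the set of Borel probability measures on ℝ^d with finite p-th moment under every slice: it is non-negative, symmetric, satisfies the triangle inequality, and max-GSW_p(μ,ν) = 0 if and only if μ = ν. -/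
open MeasureTheory ENNReal ProbabilityTheory

def couplings (μ ν : Measure ℝ) : Set (Measure (ℝ × ℝ)) :=
  {γ | IsProbabilityMeasure γ ∧ γ.map Prod.fst = μ ∧ γ.map Prod.snd = ν}

noncomputable def wCost (p : ℝ) (γ : Measure (ℝ × ℝ)) : ℝ≥0∞ :=
  ∫⁻ q, ENNReal.ofReal (dist q.1 q.2 ^ p) ∂γ

lemma wd_eq (p : ℝ) (μ ν : Measure ℝ) :
    wassersteinDist p μ ν = (⨅ γ ∈ couplings μ ν, wCost p γ) ^ (1 / p) := rfl

lemma measurable_wCostIntegrand (p : ℝ) :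
    Measurable fun q : ℝ × ℝ => ENNReal.ofReal (dist q.1 q.2 ^ p) := by
  have h : Measurable fun q : ℝ × ℝ => ENNReal.ofReal (dist q.1 q.2) :=
    measurable_dist.ennreal_ofReal
  exact (measurable_dist.pow measurable_const).ennreal_ofReal

lemma wd_self (p : ℝ) (hp : 1 ≤ p) (μ : Measure ℝ) [IsProbabilityMeasure μ] :
    wassersteinDist p μ μ = 0 := by
  have hp0 : p ≠ 0 := by intro h; rw [h] at hp; norm_num at hp
  have hdiag : Measurable fun x : ℝ => (x, x) := measurable_id.prodMk measurable_id
  have hmem : μ.map (fun x => (x, x)) ∈ couplings μ μ := by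
    refine ⟨Measure.isProbabilityMeasure_map hdiag.aemeasurable, ?_, ?_⟩
    · rw [Measure.map_map measurable_fst hdiag]
      simp [Function.comp_def, Measure.map_id]
    · rw [Measure.map_map measurable_snd hdiag]
      simp [Function.comp_def, Measure.map_id]
  have h0 : wCost p (μ.map fun x => (x, x)) = 0 := by
    rw [wCost, lintegral_map (measurable_wCostIntegrand p) hdiag]
    simp [Real.zero_rpow hp0]
  have hbase : (⨅ γ ∈ couplings μ μ, wCost p γ) = 0 :=
    le_antisymm ((iInf₂_le _ hmem).trans h0.le) zero_le
  rw [wd_eq, hbase, ENNReal.zero_rpow_of_pos (by positivity)]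

lemma wd_symm (p : ℝ) (μ ν : Measure ℝ) :
    wassersteinDist p μ ν = wassersteinDist p ν μ := by
  have key : ∀ μ ν : Measure ℝ,
      (⨅ γ ∈ couplings ν μ, wCost p γ) ≤ (⨅ γ ∈ couplings μ ν, wCost p γ) := by
    intro μ ν
    refine le_iInf₂ fun γ hγ => ?_
    obtain ⟨hprob, h1, h2⟩ := hγ
    haveI := hprob
    have hmem : γ.map Prod.swap ∈ couplings ν μ := by
      refine ⟨Measure.isProbabilityMeasure_map measurable_swap.aemeasurable, ?_, ?_⟩
      · rw [Measure.map_map measurable_fst measurable_swap]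
        exact h2
      · rw [Measure.map_map measurable_snd measurable_swap]
        exact h1
    refine (iInf₂_le _ hmem).trans_eq ?_
    rw [wCost, wCost, lintegral_map (measurable_wCostIntegrand p) measurable_swap]
    simp [dist_comm]
  rw [wd_eq, wd_eq, le_antisymm (key μ ν) (key ν μ)]

lemma le_on_closed (p : ℝ) (hp : 1 ≤ p) (μ ν : Measure ℝ)
    [IsProbabilityMeasure μ] [IsProbabilityMeasure ν]
    (h0 : (⨅ γ ∈ couplings μ ν, wCost p γ) = 0) {F : Set ℝ} (hF : IsClosed F) :
    μ F ≤ ν F := by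
  have hp0 : 0 < p := lt_of_lt_of_le one_pos hp
  have key : ∀ ε : ℝ, 0 < ε → μ F ≤ ν (Metric.thickening ε F) := by
    intro ε hε
    refine ENNReal.le_of_forall_pos_le_add fun δ hδ _ => ?_
    have hδ' : (0:ℝ) < (δ:ℝ) := hδ
    have hpos : (0:ℝ≥0∞) < ENNReal.ofReal (ε ^ p * δ) := by
      apply ENNReal.ofReal_pos.2; positivity
    have hlt : (⨅ γ ∈ couplings μ ν, wCost p γ) < ENNReal.ofReal (ε ^ p * δ) := by
      rw [h0]; exact hpos
    obtain ⟨γ, hlt⟩ := iInf_lt_iff.mp hlt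
    obtain ⟨hγ, hcost⟩ := iInf_lt_iff.mp hlt
    obtain ⟨hprob, hfst, hsnd⟩ := hγ
    haveI := hprob
    set A : Set (ℝ × ℝ) := {q | q.1 ∈ F ∧ ε ≤ dist q.1 q.2} with hA_def
    have hA : MeasurableSet A :=
      (hF.measurableSet.preimage measurable_fst).inter
        (measurableSet_le measurable_const measurable_dist)
    have hAbound : ENNReal.ofReal (ε ^ p) * γ A ≤ wCost p γ := by
      calc ENNReal.ofReal (ε ^ p) * γ A
          = ∫⁻ _ in A, ENNReal.ofReal (ε ^ p) ∂γ := by rw [setLIntegral_const]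
        _ ≤ ∫⁻ q in A, ENNReal.ofReal (dist q.1 q.2 ^ p) ∂γ := by
            refine setLIntegral_mono (measurable_wCostIntegrand p) fun q hq => ?_
            exact ENNReal.ofReal_le_ofReal (Real.rpow_le_rpow hε.le hq.2 hp0.le)
        _ ≤ wCost p γ := lintegral_mono' Measure.restrict_le_self le_rfl
    have hγA : γ A < ENNReal.ofReal δ := by
      have h1 : ENNReal.ofReal (ε ^ p) * γ A
          < ENNReal.ofReal (ε ^ p) * ENNReal.ofReal δ := by
        rw [← ENNReal.ofReal_mul (by positivity)]
        exact lt_of_le_of_lt hAbound hcost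
      exact (ENNReal.mul_lt_mul_iff_right (by simp [ENNReal.ofReal_pos]; positivity)
        ENNReal.ofReal_ne_top).mp h1
    have hsub : Prod.fst ⁻¹' F ⊆ A ∪ Prod.snd ⁻¹' (Metric.thickening ε F) := by
      intro q hq
      by_cases hd : ε ≤ dist q.1 q.2
      · exact Or.inl ⟨hq, hd⟩
      · exact Or.inr (Metric.mem_thickening_iff.2
          ⟨q.1, hq, by rw [dist_comm]; exact lt_of_not_ge hd⟩)
    have hδcoe : ENNReal.ofReal (δ:ℝ) = (δ : ℝ≥0∞) := ENNReal.ofReal_coe_nnreal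
    calc μ F = γ (Prod.fst ⁻¹' F) := by
          rw [← hfst, Measure.map_apply measurable_fst hF.measurableSet]
      _ ≤ γ (A ∪ Prod.snd ⁻¹' (Metric.thickening ε F)) := measure_mono hsub
      _ ≤ γ A + γ (Prod.snd ⁻¹' (Metric.thickening ε F)) := measure_union_le _ _
      _ ≤ ENNReal.ofReal δ + ν (Metric.thickening ε F) := by
          rw [← hsnd, Measure.map_apply measurable_snd
            Metric.isOpen_thickening.measurableSet]
          exact add_le_add hγA.le le_rfl
      _ = ν (Metric.thickening ε F) + δ := by rw [hδcoe, add_comm]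
  have hth : Filter.Tendsto (fun r => ν (Metric.thickening r F)) (nhdsWithin 0 (Set.Ioi 0))
      (nhds (ν F)) := by
    have := tendsto_measure_thickening (μ := ν) (s := F) ⟨1, one_pos, measure_ne_top ν _⟩
    rwa [hF.closure_eq] at this
  exact ge_of_tendsto hth (eventually_nhdsWithin_of_forall fun r hr => key r hr)

lemma measure_eq_of_closed (μ ν : Measure ℝ) [IsProbabilityMeasure μ] [IsProbabilityMeasure ν]
    (h : ∀ F : Set ℝ, IsClosed F → μ F = ν F) : μ = ν := by
  refine MeasureTheory.ext_of_generate_finite {s : Set ℝ | IsClosed s} ?_ ?_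
    (fun s hs => h s hs) (by simp)
  · rw [BorelSpace.measurable_eq (α := ℝ), borel_eq_generateFrom_isClosed]
  · exact fun s hs t ht _ => hs.inter ht

lemma wd_eq_zero (p : ℝ) (hp : 1 ≤ p) (μ ν : Measure ℝ)
    [IsProbabilityMeasure μ] [IsProbabilityMeasure ν]
    (h : wassersteinDist p μ ν = 0) : μ = ν := by
  have hc : (0:ℝ) < 1 / p := by positivity
  have hbase : ∀ μ' ν' : Measure ℝ, wassersteinDist p μ' ν' = 0 →
      (⨅ γ ∈ couplings μ' ν', wCost p γ) = 0 := by
    intro μ' ν' h'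
    rw [wd_eq] at h'
    rcases (ENNReal.rpow_eq_zero_iff.mp h') with ⟨h1, _⟩ | ⟨_, h2⟩
    · exact h1
    · exact absurd h2 (not_lt.2 hc.le)
  have h1 := hbase μ ν h
  have h2 := hbase ν μ (by rw [← wd_symm]; exact h)
  exact measure_eq_of_closed μ ν fun F hF =>
    le_antisymm (le_on_closed p hp μ ν h1 hF) (le_on_closed p hp ν μ h2 hF)

lemma wCost_eq (p : ℝ) (hp : 0 ≤ p) (γ : Measure (ℝ × ℝ)) :
    wCost p γ = ∫⁻ q, (ENNReal.ofReal (dist q.1 q.2)) ^ p ∂γ := by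
  simp_rw [wCost, ENNReal.ofReal_rpow_of_nonneg dist_nonneg hp]

lemma glue_le (p : ℝ) (hp : 1 ≤ p) (μ1 μ2 μ3 : Measure ℝ)
    (γ12 : Measure (ℝ × ℝ)) (h12 : γ12 ∈ couplings μ1 μ2)
    (γ23 : Measure (ℝ × ℝ)) (h23 : γ23 ∈ couplings μ2 μ3) :
    wassersteinDist p μ1 μ3 ≤ (wCost p γ12) ^ (1/p) + (wCost p γ23) ^ (1/p) := by
  obtain ⟨hprob12, hfst12, hsnd12⟩ := h12
  obtain ⟨hprob23, hfst23, hsnd23⟩ := h23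
  haveI := hprob12; haveI := hprob23
  haveI : IsProbabilityMeasure μ2 := by
    rw [← hsnd12]; exact Measure.isProbabilityMeasure_map measurable_snd.aemeasurable
  have hp0 : (0:ℝ) < p := lt_of_lt_of_le one_pos hp
  set ρ : Measure (ℝ × ℝ) := γ12.map Prod.swap with hρ
  haveI : IsProbabilityMeasure ρ := Measure.isProbabilityMeasure_map measurable_swap.aemeasurable
  have hρfst : ρ.fst = μ2 := by
    rw [Measure.fst, hρ, Measure.map_map measurable_fst measurable_swap]
    exact hsnd12
  have hγfst : γ23.fst = μ2 := hfst23
  set κ1 := ρ.condKernel with hκ1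
  set κ2 := γ23.condKernel with hκ2
  have hd1 : μ2 ⊗ₘ κ1 = ρ := by rw [← hρfst]; exact ρ.disintegrate ρ.condKernel
  have hd2 : μ2 ⊗ₘ κ2 = γ23 := by rw [← hγfst]; exact γ23.disintegrate γ23.condKernel
  set γ : Measure (ℝ × (ℝ × ℝ)) := μ2 ⊗ₘ (κ1 ×ₖ κ2) with hγdef
  haveI : IsProbabilityMeasure γ := by rw [hγdef]; infer_instance
  have hmA : Measurable fun q : ℝ × (ℝ × ℝ) => (q.1, q.2.1) :=
    measurable_fst.prodMk (measurable_fst.comp measurable_snd)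
  have hmB : Measurable fun q : ℝ × (ℝ × ℝ) => (q.1, q.2.2) :=
    measurable_fst.prodMk (measurable_snd.comp measurable_snd)
  have hmapA : γ.map (fun q => (q.1, q.2.1)) = ρ := by
    rw [← hd1]
    ext s hs
    rw [Measure.map_apply hmA hs, hγdef,
      Measure.compProd_apply (hs.preimage hmA), Measure.compProd_apply hs]
    refine lintegral_congr fun y => ?_
    have ht : MeasurableSet {x : ℝ | (y, x) ∈ s} := measurable_prodMk_left hs
    calc (κ1 ×ₖ κ2) y (Prod.mk y ⁻¹' ((fun q : ℝ × (ℝ × ℝ) => (q.1, q.2.1)) ⁻¹' s))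
        = (Kernel.fst (κ1 ×ₖ κ2)) y {x | (y, x) ∈ s} := by
          rw [Kernel.fst_apply' _ _ ht]; rfl
      _ = κ1 y (Prod.mk y ⁻¹' s) := by rw [Kernel.fst_prod]; rfl
  have hmapB : γ.map (fun q => (q.1, q.2.2)) = γ23 := by
    rw [← hd2]
    ext s hs
    rw [Measure.map_apply hmB hs, hγdef,
      Measure.compProd_apply (hs.preimage hmB), Measure.compProd_apply hs]
    refine lintegral_congr fun y => ?_
    have ht : MeasurableSet {x : ℝ | (y, x) ∈ s} := measurable_prodMk_left hs
    calc (κ1 ×ₖ κ2) y (Prod.mk y ⁻¹' ((fun q : ℝ × (ℝ × ℝ) => (q.1, q.2.2)) ⁻¹' s))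
        = (Kernel.snd (κ1 ×ₖ κ2)) y {x | (y, x) ∈ s} := by
          rw [Kernel.snd_apply' _ _ ht]; rfl
      _ = κ2 y (Prod.mk y ⁻¹' s) := by rw [Kernel.snd_prod]; rfl
  set γ13 : Measure (ℝ × ℝ) := γ.map (fun q => q.2) with hγ13
  have hmem : γ13 ∈ couplings μ1 μ3 := by
    refine ⟨Measure.isProbabilityMeasure_map measurable_snd.aemeasurable, ?_, ?_⟩
    · rw [hγ13, Measure.map_map measurable_fst measurable_snd]
      have h1 : (Prod.fst ∘ Prod.snd : ℝ × (ℝ × ℝ) → ℝ)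
          = Prod.snd ∘ (fun q : ℝ × (ℝ × ℝ) => (q.1, q.2.1)) := rfl
      rw [h1, ← Measure.map_map measurable_snd hmA, hmapA, hρ,
        Measure.map_map measurable_snd measurable_swap]
      exact hfst12
    · rw [hγ13, Measure.map_map measurable_snd measurable_snd]
      have h1 : (Prod.snd ∘ Prod.snd : ℝ × (ℝ × ℝ) → ℝ)
          = Prod.snd ∘ (fun q : ℝ × (ℝ × ℝ) => (q.1, q.2.2)) := rfl
      rw [h1, ← Measure.map_map measurable_snd hmB, hmapB]
      exact hsnd23
  set F : ℝ × (ℝ × ℝ) → ℝ≥0∞ := fun q => ENNReal.ofReal (dist q.2.1 q.1) with hFdef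
  set G : ℝ × (ℝ × ℝ) → ℝ≥0∞ := fun q => ENNReal.ofReal (dist q.1 q.2.2) with hGdef
  have hFm : Measurable F :=
    (measurable_dist.comp ((measurable_fst.comp measurable_snd).prodMk
      measurable_fst)).ennreal_ofReal
  have hGm : Measurable G :=
    (measurable_dist.comp (measurable_fst.prodMk
      (measurable_snd.comp measurable_snd))).ennreal_ofReal
  have hmeasp : Measurable fun r : ℝ × ℝ => (ENNReal.ofReal (dist r.1 r.2)) ^ p :=
    ENNReal.continuous_rpow_const.measurable.comp measurable_dist.ennreal_ofReal
  have hmeasp' : Measurable fun r : ℝ × ℝ => (ENNReal.ofReal (dist r.2 r.1)) ^ p :=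
    ENNReal.continuous_rpow_const.measurable.comp
      ((measurable_dist.comp (measurable_snd.prodMk measurable_fst)).ennreal_ofReal)
  have key1 : ∫⁻ q, (F q) ^ p ∂γ = wCost p γ12 := by
    calc ∫⁻ q, (F q) ^ p ∂γ
        = ∫⁻ r : ℝ × ℝ, (ENNReal.ofReal (dist r.2 r.1)) ^ p
            ∂(γ.map fun q => (q.1, q.2.1)) := (lintegral_map hmeasp' hmA).symm
      _ = ∫⁻ r : ℝ × ℝ, (ENNReal.ofReal (dist r.2 r.1)) ^ p ∂ρ := by rw [hmapA]
      _ = ∫⁻ r : ℝ × ℝ,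
            (ENNReal.ofReal (dist (Prod.swap r).2 (Prod.swap r).1)) ^ p ∂γ12 := by
          rw [hρ]; exact lintegral_map hmeasp' measurable_swap
      _ = wCost p γ12 := by
          rw [wCost_eq p hp0.le]; exact lintegral_congr fun r => rfl
  have key2 : ∫⁻ q, (G q) ^ p ∂γ = wCost p γ23 := by
    calc ∫⁻ q, (G q) ^ p ∂γ
        = ∫⁻ r : ℝ × ℝ, (ENNReal.ofReal (dist r.1 r.2)) ^ p
            ∂(γ.map fun q => (q.1, q.2.2)) := (lintegral_map hmeasp hmB).symm
      _ = ∫⁻ r : ℝ × ℝ, (ENNReal.ofReal (dist r.1 r.2)) ^ p ∂γ23 := by rw [hmapB]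
      _ = wCost p γ23 := (wCost_eq p hp0.le γ23).symm
  have hcost13 : wCost p γ13 = ∫⁻ q, (ENNReal.ofReal (dist q.2.1 q.2.2)) ^ p ∂γ := by
    rw [wCost_eq p hp0.le, hγ13, lintegral_map hmeasp measurable_snd]
  have hpt : ∀ q : ℝ × (ℝ × ℝ),
      (ENNReal.ofReal (dist q.2.1 q.2.2)) ^ p ≤ ((F + G) q) ^ p := by
    intro q
    refine ENNReal.rpow_le_rpow ?_ hp0.le
    refine le_trans (ENNReal.ofReal_le_ofReal (dist_triangle q.2.1 q.1 q.2.2)) ?_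
    exact ENNReal.ofReal_add_le
  have hLp := ENNReal.lintegral_Lp_add_le (μ := γ) hFm.aemeasurable hGm.aemeasurable hp
  have h13 : (wCost p γ13) ^ (1/p) ≤ (wCost p γ12) ^ (1/p) + (wCost p γ23) ^ (1/p) := by
    rw [hcost13, ← key1, ← key2]
    exact le_trans (ENNReal.rpow_le_rpow (lintegral_mono hpt) (by positivity)) hLp
  refine le_trans ?_ h13
  rw [wd_eq]
  exact ENNReal.rpow_le_rpow (iInf₂_le _ hmem) (by positivity)

lemma wd_triangle (p : ℝ) (hp : 1 ≤ p) (μ1 μ2 μ3 : Measure ℝ) :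
    wassersteinDist p μ1 μ3
      ≤ wassersteinDist p μ1 μ2 + wassersteinDist p μ2 μ3 := by
  have hc : (0:ℝ) < 1 / p := by positivity
  set e := ENNReal.orderIsoRpow (1/p) hc with he
  have hrw : ∀ μ ν : Measure ℝ,
      wassersteinDist p μ ν = ⨅ γ ∈ couplings μ ν, (wCost p γ) ^ (1/p) := by
    intro μ ν
    rw [wd_eq]
    have : ((⨅ γ ∈ couplings μ ν, wCost p γ) ^ (1/p) : ℝ≥0∞)
        = e (⨅ γ ∈ couplings μ ν, wCost p γ) := rfl
    rw [this, e.map_iInf]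
    exact iInf_congr fun γ => e.map_iInf _
  rw [hrw μ1 μ2, hrw μ2 μ3]
  rw [ENNReal.iInf_add]
  refine le_iInf fun γ12 => ?_
  rw [ENNReal.iInf_add]
  refine le_iInf fun h12 => ?_
  rw [ENNReal.add_iInf]
  refine le_iInf fun γ23 => ?_
  rw [ENNReal.add_iInf]
  refine le_iInf fun h23 => ?_
  exact glue_le p hp μ1 μ2 μ3 γ12 h12 γ23 h23


/-- The maximum generalized sliced `p`-Wasserstein distance associated with the defining
function `g`: the supremum over the parameter space of the `p`-Wasserstein distance between
the slices. -/
noncomputable def maxGSW {d : ℕ} {Θ : Type*} (p : ℝ)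
    (g : (Fin d → ℝ) → Θ → ℝ) (μ ν : Measure (Fin d → ℝ)) : ℝ≥0∞ :=
  ⨆ θ : Θ, wassersteinDist p (μ.map fun x => g x θ) (ν.map fun x => g x θ)

/-- If the generalized Radon transform associated with `g` is injective on probability
measures (with almost-everywhere replaced by everywhere since the parameter space carries no
measure), then the maximum generalized sliced `p`-Wasserstein distance is a metric on the set
of Borel probability measures on `ℝ^d` with finite `p`-th moment under every slice: it is
non-negative, symmetric, satisfies the triangle inequality, and vanishes exactly on the
diagonal. -/
theorem maxGSW_metric {d : ℕ} {Θ : Type*}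
    (p : ℝ) (hp : 1 ≤ p)
    (g : (Fin d → ℝ) → Θ → ℝ) (hg : ∀ θ : Θ, Measurable fun x => g x θ)
    (hinj : ∀ μ ν : Measure (Fin d → ℝ), IsProbabilityMeasure μ → IsProbabilityMeasure ν →
      (∀ θ : Θ, μ.map (fun x => g x θ) = ν.map (fun x => g x θ)) → μ = ν)
    (hfin : ∀ μ ν : Measure (Fin d → ℝ), IsProbabilityMeasure μ → IsProbabilityMeasure ν →
      (∀ θ : Θ, ∫⁻ x, ENNReal.ofReal (|g x θ| ^ p) ∂μ < ∞) →
      (∀ θ : Θ, ∫⁻ x, ENNReal.ofReal (|g x θ| ^ p) ∂ν < ∞) →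
      maxGSW p g μ ν < ∞) :
    (∀ μ ν : Measure (Fin d → ℝ), IsProbabilityMeasure μ → IsProbabilityMeasure ν →
      (∀ θ : Θ, ∫⁻ x, ENNReal.ofReal (|g x θ| ^ p) ∂μ < ∞) →
      (∀ θ : Θ, ∫⁻ x, ENNReal.ofReal (|g x θ| ^ p) ∂ν < ∞) →
      0 ≤ maxGSW p g μ ν ∧ maxGSW p g μ ν = maxGSW p g ν μ ∧
        (maxGSW p g μ ν = 0 ↔ μ = ν)) ∧
    (∀ μ₁ μ₂ μ₃ : Measure (Fin d → ℝ),
      IsProbabilityMeasure μ₁ → IsProbabilityMeasure μ₂ → IsProbabilityMeasure μ₃ →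
      (∀ θ : Θ, ∫⁻ x, ENNReal.ofReal (|g x θ| ^ p) ∂μ₁ < ∞) →
      (∀ θ : Θ, ∫⁻ x, ENNReal.ofReal (|g x θ| ^ p) ∂μ₂ < ∞) →
      (∀ θ : Θ, ∫⁻ x, ENNReal.ofReal (|g x θ| ^ p) ∂μ₃ < ∞) →
      maxGSW p g μ₁ μ₃ ≤ maxGSW p g μ₁ μ₂ + maxGSW p g μ₂ μ₃) := by
  constructor
  · intro μ ν hμ hν _ _
    haveI := hμ; haveI := hν
    refine ⟨zero_le, ?_, ?_, ?_⟩
    · exact iSup_congr fun θ => wd_symm p _ _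
    · intro h0
      refine hinj μ ν hμ hν fun θ => ?_
      haveI : IsProbabilityMeasure (μ.map fun x => g x θ) :=
        Measure.isProbabilityMeasure_map (hg θ).aemeasurable
      haveI : IsProbabilityMeasure (ν.map fun x => g x θ) :=
        Measure.isProbabilityMeasure_map (hg θ).aemeasurable
      refine wd_eq_zero p hp _ _ ?_
      exact le_antisymm (le_trans (le_iSup
        (fun θ => wassersteinDist p (μ.map fun x => g x θ) (ν.map fun x => g x θ)) θ)
        h0.le) zero_le
    · rintro rfl
      refine le_antisymm (iSup_le fun θ => ?_) zero_le
      haveI : IsProbabilityMeasure (μ.map fun x => g x θ) :=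
        Measure.isProbabilityMeasure_map (hg θ).aemeasurable
      exact (wd_self p hp _).le
  · intro μ1 μ2 μ3 h1 h2 h3 _ _ _
    haveI := h1; haveI := h2; haveI := h3
    refine iSup_le fun θ => ?_
    refine (wd_triangle p hp _ (μ2.map fun x => g x θ) _).trans ?_
    exact add_le_add
      (le_iSup (fun θ => wassersteinDist p (μ1.map fun x => g x θ) (μ2.map fun x => g x θ)) θ)
      (le_iSup (fun θ => wassersteinDist p (μ2.map fun x => g x θ) (μ3.map fun x => g x θ)) θ)
end

section
/- Closed-form quantile formula for the one-dimensional p-Wasserstein distance: for p ∈ [1,∞) and Borel probability measures μ, ν on ℝ with finite p-th moment, W_p(μ,ν)^p = ∫₀¹ |F_μ⁻¹(z) − F_ν⁻¹(z)|^p dz, where F_μ and F_ν are the cumulative distribution functions of μ and ν and F⁻¹(z) = inf{x ∈ ℝ : F(x) ≥ z} denotes the generalized inverse (quantile function). -/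
open MeasureTheory ENNReal Set Filter ProbabilityTheory
open scoped Topology

set_option linter.unusedSectionVars false
set_option linter.unusedVariables false

/-- The quantile function (generalized inverse of the cumulative distribution function
`F_μ(x) = μ((-∞, x])`) of a measure `μ` on `ℝ`. -/
noncomputable def quantile (μ : Measure ℝ) (z : ℝ) : ℝ :=
  sInf {x : ℝ | z ≤ (μ (Set.Iic x)).toReal}




section QuantileLemmas

variable (μ : Measure ℝ) [IsProbabilityMeasure μ]

lemma quantile_set_eq (z : ℝ) :
    {x : ℝ | z ≤ (μ (Set.Iic x)).toReal} = {x : ℝ | z ≤ cdf μ x} := by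
  simp [cdf_eq_real, measureReal_def]

lemma quantile_eq (z : ℝ) : quantile μ z = sInf {x : ℝ | z ≤ cdf μ x} := by
  rw [quantile, quantile_set_eq]

lemma quantile_setNE {z : ℝ} (hz1 : z < 1) : {x : ℝ | z ≤ cdf μ x}.Nonempty := by
  obtain ⟨x, hx⟩ := ((tendsto_cdf_atTop μ).eventually (eventually_gt_nhds hz1)).exists
  exact ⟨x, hx.le⟩

lemma quantile_setBdd {z : ℝ} (hz0 : 0 < z) : BddBelow {x : ℝ | z ≤ cdf μ x} := by
  obtain ⟨x₀, hx₀⟩ := ((tendsto_cdf_atBot μ).eventually (eventually_lt_nhds hz0)).exists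
  refine ⟨x₀, fun x hx => ?_⟩
  by_contra h
  push_neg at h
  exact absurd (le_trans hx (monotone_cdf μ h.le)) (not_le.2 hx₀)

lemma le_cdf_quantile {z : ℝ} (hz0 : 0 < z) (hz1 : z < 1) :
    z ≤ cdf μ (quantile μ z) := by
  rw [quantile_eq]
  set q := sInf {x : ℝ | z ≤ cdf μ x} with hq
  have h1 : ∀ x ∈ Ioi q, z ≤ cdf μ x := by
    intro x hx
    obtain ⟨y, hy, hyx⟩ := exists_lt_of_csInf_lt (quantile_setNE μ hz1) (show q < x from hx)
    exact le_trans hy (monotone_cdf μ hyx.le)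
  have h2 : Tendsto (cdf μ) (𝓝[>] q) (𝓝 (cdf μ q)) :=
    ((cdf μ).right_continuous q).mono Ioi_subset_Ici_self
  exact ge_of_tendsto h2 (eventually_nhdsWithin_of_forall h1)

lemma quantile_le_iff {z x : ℝ} (hz0 : 0 < z) (hz1 : z < 1) :
    quantile μ z ≤ x ↔ z ≤ cdf μ x := by
  constructor
  · intro h
    exact le_trans (le_cdf_quantile μ hz0 hz1) (monotone_cdf μ h)
  · intro h
    rw [quantile_eq]
    exact csInf_le (quantile_setBdd μ hz0) h

lemma quantile_of_nonpos {z : ℝ} (hz : z ≤ 0) : quantile μ z = 0 := by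
  have : {x : ℝ | z ≤ (μ (Set.Iic x)).toReal} = univ := by
    ext x; simp only [mem_setOf_eq, mem_univ, iff_true]
    exact hz.trans ENNReal.toReal_nonneg
  rw [quantile, this]
  exact Real.sInf_of_not_bddBelow not_bddBelow_univ

lemma quantile_of_one_lt {z : ℝ} (hz : 1 < z) : quantile μ z = 0 := by
  have : {x : ℝ | z ≤ (μ (Set.Iic x)).toReal} = ∅ := by
    ext x; simp only [mem_setOf_eq, mem_empty_iff_false, iff_false, not_le]
    calc (μ (Set.Iic x)).toReal ≤ (μ univ).toReal := by
          apply ENNReal.toReal_mono (measure_ne_top μ _) (measure_mono (subset_univ _))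
      _ = 1 := by simp
      _ < z := hz
  rw [quantile, this]
  exact Real.sInf_empty

lemma measurable_quantile : Measurable (quantile μ) := by
  apply measurable_of_Iic
  intro x
  have hset : quantile μ ⁻¹' Iic x =
      (Ioo (0:ℝ) 1 ∩ Iic (cdf μ x)) ∪ (quantile μ ⁻¹' Iic x ∩ {1}) ∪
      (if (0:ℝ) ≤ x then (Iic (0:ℝ) ∪ Ioi 1) else ∅) := by
    ext z
    simp only [mem_union, mem_inter_iff, mem_preimage, mem_Iic, mem_Ioo, mem_singleton_iff]
    constructor
    · intro h
      rcases le_or_gt z 0 with hz | hz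
      · right
        rw [quantile_of_nonpos μ hz] at h
        simp [h, hz]
      · rcases lt_trichotomy z 1 with hz1 | hz1 | hz1
        · exact Or.inl (Or.inl ⟨⟨hz, hz1⟩, (quantile_le_iff μ hz hz1).1 h⟩)
        · exact Or.inl (Or.inr ⟨h, hz1⟩)
        · right
          rw [quantile_of_one_lt μ hz1] at h
          simp [h, not_le.2 hz1, hz1]
    · intro h
      rcases h with (⟨⟨hz0, hz1⟩, hle⟩ | ⟨h1, _⟩) | h
      · exact (quantile_le_iff μ hz0 hz1).2 hle
      · exact h1
      · split_ifs at h with hx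
        · rcases h with h | h
          · rw [quantile_of_nonpos μ h]; exact hx
          · rw [quantile_of_one_lt μ h]; exact hx
        · exact absurd h (notMem_empty z)
  rw [hset]
  refine (((measurableSet_Ioo.inter measurableSet_Iic).union ?_).union ?_)
  · exact (Set.Countable.mono (inter_subset_right) (countable_singleton 1)).measurableSet
  · split_ifs
    · exact measurableSet_Iic.union measurableSet_Ioi
    · exact MeasurableSet.empty

lemma map_quantile : Measure.map (quantile μ) (volume.restrict (Ioo 0 1)) = μ := by
  have hmap : IsProbabilityMeasure (Measure.map (quantile μ) (volume.restrict (Ioo 0 1))) := by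
    constructor
    rw [Measure.map_apply (measurable_quantile μ) MeasurableSet.univ]
    simp [Real.volume_Ioo]
  refine Measure.ext_of_Iic _ _ (fun x => ?_)
  rw [Measure.map_apply (measurable_quantile μ) measurableSet_Iic,
    Measure.restrict_apply (measurable_quantile μ measurableSet_Iic)]
  have hsub : quantile μ ⁻¹' Iic x ∩ Ioo 0 1 = Iic (cdf μ x) ∩ Ioo 0 1 := by
    ext z
    simp only [mem_inter_iff, mem_preimage, mem_Iic, mem_Ioo]
    constructor
    · rintro ⟨h, hz0, hz1⟩
      exact ⟨(quantile_le_iff μ hz0 hz1).1 h, hz0, hz1⟩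
    · rintro ⟨h, hz0, hz1⟩
      exact ⟨(quantile_le_iff μ hz0 hz1).2 h, hz0, hz1⟩
  rw [hsub]
  have hc0 : 0 ≤ cdf μ x := cdf_nonneg μ x
  have hc1 : cdf μ x ≤ 1 := cdf_le_one μ x
  rcases lt_or_eq_of_le hc1 with hlt | heq
  · have : Iic (cdf μ x) ∩ Ioo 0 1 = Ioc 0 (cdf μ x) := by
      ext z
      simp only [mem_inter_iff, mem_Iic, mem_Ioo, mem_Ioc]
      exact ⟨fun ⟨h, hz0, _⟩ => ⟨hz0, h⟩, fun ⟨hz0, h⟩ => ⟨h, hz0, lt_of_le_of_lt h hlt⟩⟩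
    rw [this, Real.volume_Ioc, sub_zero, ofReal_cdf]
  · have : Iic (cdf μ x) ∩ Ioo 0 1 = Ioo 0 1 := by
      rw [inter_eq_self_of_subset_right]
      intro z hz
      simp only [mem_Iic]
      exact le_of_lt (heq ▸ hz.2)
    rw [this, Real.volume_Ioo, ← ofReal_cdf, ← heq]
    norm_num

end QuantileLemmas

section Rho

variable {p : ℝ}

/-- The Stieltjes function `u ↦ p * u ^ (p-1)` for `u ≥ 0`, `0` for `u < 0`. -/
noncomputable def rhoF (p : ℝ) (hp : 1 ≤ p) : StieltjesFunction ℝ where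
  toFun u := if u < 0 then 0 else p * u ^ (p - 1)
  mono' := by
    intro u v huv
    dsimp only
    have hp0 : (0:ℝ) ≤ p := le_trans zero_le_one hp
    split_ifs with h1 h2 h2
    · exact le_refl 0
    · push_neg at h2
      exact mul_nonneg hp0 (Real.rpow_nonneg h2 _)
    · exact absurd (lt_of_le_of_lt huv h2) (not_lt.2 (not_lt.1 h1))
    · push_neg at h1
      exact mul_le_mul_of_nonneg_left
        (Real.rpow_le_rpow h1 huv (by linarith)) hp0
  right_continuous' := by
    intro x
    rcases lt_or_ge x 0 with hx | hx
    · have : (fun u => if u < 0 then (0:ℝ) else p * u ^ (p - 1)) =ᶠ[𝓝 x] (fun _ => 0) := by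
        filter_upwards [Iio_mem_nhds hx] with u hu
        simp only [mem_Iio] at hu
        rw [if_pos hu]
      exact (continuousAt_const.congr this.symm).continuousWithinAt
    · rcases eq_or_lt_of_le hp with hp1 | hp1
      · -- p = 1 : function is constant 1 on Ici 0
        apply ContinuousWithinAt.congr (f := fun _ => (1:ℝ)) continuousWithinAt_const
        · intro u hu
          have hu0 : ¬ u < 0 := not_lt.2 (le_trans hx hu)
          simp [hu0, ← hp1, Real.rpow_zero]
        · simp [not_lt.2 hx, ← hp1, Real.rpow_zero]
      · -- p > 1 : continuous at x within Ici x
        have hcont : ContinuousAt (fun u : ℝ => p * u ^ (p - 1)) x := by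
          apply ContinuousAt.mul continuousAt_const
          exact Real.continuousAt_rpow_const x (p - 1)
            (Or.inr (by linarith))
        apply ContinuousWithinAt.congr hcont.continuousWithinAt
        · intro u hu
          simp [not_lt.2 (le_trans hx hu)]
        · simp [not_lt.2 hx]
  
lemma rhoF_apply (hp : 1 ≤ p) (u : ℝ) :
    rhoF p hp u = if u < 0 then 0 else p * u ^ (p - 1) := rfl

lemma rhoF_tendsto_atBot (hp : 1 ≤ p) : Tendsto (rhoF p hp) atBot (𝓝 0) := by
  apply Tendsto.congr' _ tendsto_const_nhds
  filter_upwards [Iio_mem_atBot (0:ℝ)] with u hu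
  simp only [mem_Iio] at hu
  rw [rhoF_apply, if_pos hu]

lemma rhoF_measure_Iic (hp : 1 ≤ p) (u : ℝ) :
    (rhoF p hp).measure (Iic u) = ENNReal.ofReal (rhoF p hp u) := by
  rw [StieltjesFunction.measure_Iic _ (rhoF_tendsto_atBot hp), sub_zero]

lemma rhoF_measure_Iio_zero (hp : 1 ≤ p) : (rhoF p hp).measure (Iio 0) = 0 := by
  have : Iio (0:ℝ) = ⋃ n : ℕ, Iic (-(1:ℝ)/(n+1)) := by
    ext u
    simp only [mem_Iio, mem_iUnion, mem_Iic]
    constructor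
    · intro hu
      obtain ⟨n, hn⟩ := exists_nat_gt (1 / (-u))
      refine ⟨n, ?_⟩
      rw [div_lt_iff₀ (by linarith)] at hn
      have h2 : (1:ℝ)/(n+1) ≤ -u := by
        rw [div_le_iff₀ (by positivity)]
        nlinarith
      rw [neg_div]
      linarith
    · rintro ⟨n, hn⟩
      have h0 : (0:ℝ) < 1/((n:ℝ)+1) := by positivity
      rw [neg_div] at hn
      linarith
  rw [this]
  apply measure_iUnion_null
  intro n
  rw [rhoF_measure_Iic hp, rhoF_apply]
  have hneg : -(1:ℝ)/((n:ℝ)+1) < 0 := by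
    have h0 : (0:ℝ) < 1/((n:ℝ)+1) := by positivity
    rw [neg_div]
    linarith
  rw [if_pos hneg, ENNReal.ofReal_zero]

end Rho

section SliceIdentity

variable {p : ℝ}

lemma slice_measure (hp : 1 ≤ p) (x y t : ℝ) :
    (rhoF p hp).measure {v : ℝ | x < t ∧ t + v ≤ y}
      = if x < t then ENNReal.ofReal (rhoF p hp (y - t)) else 0 := by
  split_ifs with h
  · have : {v : ℝ | x < t ∧ t + v ≤ y} = Iic (y - t) := by
      ext v
      simp only [mem_setOf_eq, mem_Iic, h, true_and]
      constructor <;> intro <;> linarith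
    rw [this, rhoF_measure_Iic]
  · have : {v : ℝ | x < t ∧ t + v ≤ y} = ∅ := by
      ext v; simp [h]
    simp [this]

lemma integrableOn_kernel (hp : 1 ≤ p) (x y : ℝ) :
    IntegrableOn (fun t => p * (y - t) ^ (p - 1)) (Ioc x y) volume := by
  apply IntegrableOn.mono_set _ Ioc_subset_Icc_self
  apply ContinuousOn.integrableOn_compact isCompact_Icc
  rcases eq_or_lt_of_le hp with hp1 | hp1
  · apply ContinuousOn.congr (continuousOn_const (c := p * 1))
    intro t _
    rw [← hp1]
    norm_num
  · apply ContinuousOn.mul continuousOn_const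
    apply Continuous.continuousOn
    have hcont : Continuous (fun u : ℝ => u ^ (p - 1)) := by
      rw [continuous_iff_continuousAt]
      intro u
      exact Real.continuousAt_rpow_const u (p - 1) (Or.inr (by linarith))
    exact hcont.comp (continuous_const.sub continuous_id)

lemma interval_integral_kernel (hp : 1 ≤ p) {x y : ℝ} (hxy : x ≤ y) :
    ∫ t in Set.Ioc x y, p * (y - t) ^ (p - 1) = (y - x) ^ p := by
  have hp0 : p ≠ 0 := by linarith
  rw [← intervalIntegral.integral_of_le hxy]
  rw [intervalIntegral.integral_const_mul]
  have h1 : (∫ t in x..y, (y - t) ^ (p - 1)) = ∫ u in (y - y)..(y - x), u ^ (p - 1) :=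
    intervalIntegral.integral_comp_sub_left (fun u => u ^ (p - 1)) y
  rw [h1, sub_self]
  rw [integral_rpow (Or.inl (by linarith))]
  rw [sub_add_cancel, Real.zero_rpow hp0, sub_zero]
  field_simp

lemma prod_rho_eq_of_le (hp : 1 ≤ p) {x y : ℝ} (hxy : x ≤ y) :
    (volume.prod (rhoF p hp).measure) {w : ℝ × ℝ | x < w.1 ∧ w.1 + w.2 ≤ y}
      = ENNReal.ofReal ((y - x) ^ p) := by
  have hS : MeasurableSet {w : ℝ × ℝ | x < w.1 ∧ w.1 + w.2 ≤ y} :=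
    (measurableSet_lt measurable_const measurable_fst).inter
      (measurableSet_le (measurable_fst.add measurable_snd) measurable_const)
  rw [Measure.prod_apply hS]
  have hslice : ∀ t : ℝ, (rhoF p hp).measure (Prod.mk t ⁻¹' {w : ℝ × ℝ | x < w.1 ∧ w.1 + w.2 ≤ y})
      = (Ioi x).indicator (fun t => ENNReal.ofReal (rhoF p hp (y - t))) t := by
    intro t
    rw [show Prod.mk t ⁻¹' {w : ℝ × ℝ | x < w.1 ∧ w.1 + w.2 ≤ y} = {v : ℝ | x < t ∧ t + v ≤ y}
      from rfl, slice_measure hp]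
    by_cases ht : x < t <;> simp [Set.indicator_apply, ht]
  simp_rw [hslice]
  rw [lintegral_indicator measurableSet_Ioi]
  rw [← Set.Ioc_union_Ioi_eq_Ioi hxy,
    lintegral_union measurableSet_Ioi (Set.Ioc_disjoint_Ioi le_rfl)]
  have h2 : ∫⁻ t in Ioi y, ENNReal.ofReal (rhoF p hp (y - t)) = 0 := by
    rw [setLIntegral_congr_fun measurableSet_Ioi
      (fun t (ht : t ∈ Ioi y) => ?_), lintegral_zero]
    rw [rhoF_apply, if_pos (by simp only [mem_Ioi] at ht; linarith), ENNReal.ofReal_zero]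
  rw [h2, add_zero]
  have h3 : ∀ t ∈ Ioc x y, ENNReal.ofReal (rhoF p hp (y - t))
      = ENNReal.ofReal (p * (y - t) ^ (p - 1)) := by
    intro t ht
    rw [rhoF_apply, if_neg (by simp only [mem_Ioc] at ht; push_neg; linarith)]
  rw [setLIntegral_congr_fun measurableSet_Ioc h3]
  rw [← ofReal_integral_eq_lintegral_ofReal (integrableOn_kernel hp x y) ?_]
  · rw [interval_integral_kernel hp hxy]
  · rw [EventuallyLE, ae_restrict_iff' measurableSet_Ioc]
    apply ae_of_all
    intro t ht
    simp only [mem_Ioc] at ht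
    have : (0:ℝ) ≤ (y - t) ^ (p - 1) := Real.rpow_nonneg (by linarith) _
    have hp0 : (0:ℝ) ≤ p := by linarith
    positivity

lemma prod_rho_eq_zero (hp : 1 ≤ p) {x y : ℝ} (hxy : y ≤ x) :
    (volume.prod (rhoF p hp).measure) {w : ℝ × ℝ | x < w.1 ∧ w.1 + w.2 ≤ y} = 0 := by
  have hS : MeasurableSet {w : ℝ × ℝ | x < w.1 ∧ w.1 + w.2 ≤ y} :=
    (measurableSet_lt measurable_const measurable_fst).inter
      (measurableSet_le (measurable_fst.add measurable_snd) measurable_const)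
  rw [Measure.prod_apply hS]
  have h0 : ∀ t : ℝ, (rhoF p hp).measure
      (Prod.mk t ⁻¹' {w : ℝ × ℝ | x < w.1 ∧ w.1 + w.2 ≤ y}) = 0 := by
    intro t
    rw [show Prod.mk t ⁻¹' {w : ℝ × ℝ | x < w.1 ∧ w.1 + w.2 ≤ y} = {v : ℝ | x < t ∧ t + v ≤ y}
      from rfl, slice_measure hp]
    split_ifs with ht
    · rw [rhoF_apply, if_pos (by linarith), ENNReal.ofReal_zero]
    · rfl
  rw [lintegral_congr h0, lintegral_zero]

lemma pointwise_identity (hp : 1 ≤ p) (q : ℝ × ℝ) :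
    ENNReal.ofReal (|q.1 - q.2| ^ p)
      = (volume.prod (rhoF p hp).measure) {w : ℝ × ℝ | q.1 < w.1 ∧ w.1 + w.2 ≤ q.2}
        + (volume.prod (rhoF p hp).measure) {w : ℝ × ℝ | q.2 < w.1 ∧ w.1 + w.2 ≤ q.1} := by
  rcases le_total q.1 q.2 with h | h
  · rw [prod_rho_eq_of_le hp h, prod_rho_eq_zero hp h, add_zero,
      abs_of_nonpos (by linarith), neg_sub]
  · rw [prod_rho_eq_of_le hp h, prod_rho_eq_zero hp h, zero_add,
      abs_of_nonneg (by linarith)]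

end SliceIdentity

section Coupling

variable {p : ℝ}

lemma lintegral_indicator_section_right {α β : Type*} [MeasurableSpace α] [MeasurableSpace β]
    (m : Measure β) {S : Set (α × β)} (hS : MeasurableSet S) (a : α) :
    ∫⁻ b, S.indicator (fun _ => (1:ℝ≥0∞)) (a, b) ∂m = m (Prod.mk a ⁻¹' S) := by
  have h : (fun b => S.indicator (fun _ => (1:ℝ≥0∞)) (a, b))
      = (Prod.mk a ⁻¹' S).indicator (fun _ => (1:ℝ≥0∞)) := by
    ext b
    by_cases hb : (a, b) ∈ S <;> simp [Set.indicator_apply, hb]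
  rw [h, lintegral_indicator (hS.preimage measurable_prodMk_left), setLIntegral_one]

lemma lintegral_indicator_section_left {α β : Type*} [MeasurableSpace α] [MeasurableSpace β]
    (m : Measure α) {S : Set (α × β)} (hS : MeasurableSet S) (b : β) :
    ∫⁻ a, S.indicator (fun _ => (1:ℝ≥0∞)) (a, b) ∂m = m {a | (a, b) ∈ S} := by
  have h : (fun a => S.indicator (fun _ => (1:ℝ≥0∞)) (a, b))
      = {a | (a, b) ∈ S}.indicator (fun _ => (1:ℝ≥0∞)) := by
    ext a
    by_cases ha : (a, b) ∈ S <;> simp [Set.indicator_apply, ha]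
  rw [h]
  rw [show ({a | (a, b) ∈ S} : Set α) = (fun a => (a, b)) ⁻¹' S from rfl,
    lintegral_indicator (hS.preimage (measurable_prodMk_right)), setLIntegral_one]

private lemma measD1 : MeasurableSet {r : (ℝ × ℝ) × ℝ × ℝ | r.1.1 < r.2.1 ∧ r.2.1 + r.2.2 ≤ r.1.2} :=
  (measurableSet_lt measurable_fst.fst measurable_snd.fst).inter
    (measurableSet_le (measurable_snd.fst.add measurable_snd.snd) measurable_fst.snd)

private lemma measD2 : MeasurableSet {r : (ℝ × ℝ) × ℝ × ℝ | r.1.2 < r.2.1 ∧ r.2.1 + r.2.2 ≤ r.1.1} :=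
  (measurableSet_lt measurable_fst.snd measurable_snd.fst).inter
    (measurableSet_le (measurable_snd.fst.add measurable_snd.snd) measurable_fst.fst)

/-- The two-layer representation of the transport cost, for any σ-finite `γ`. -/
lemma cost_eq_lintegral_prod (hp : 1 ≤ p) (γ : Measure (ℝ × ℝ)) [SigmaFinite γ] :
    ∫⁻ q, ENNReal.ofReal (|q.1 - q.2| ^ p) ∂γ
      = ∫⁻ w, (γ {q : ℝ × ℝ | q.1 < w.1 ∧ w.1 + w.2 ≤ q.2}
          + γ {q : ℝ × ℝ | q.2 < w.1 ∧ w.1 + w.2 ≤ q.1}) ∂(volume.prod (rhoF p hp).measure) := by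
  set π : Measure (ℝ × ℝ) := volume.prod (rhoF p hp).measure with hπ
  set D₁ : Set ((ℝ × ℝ) × ℝ × ℝ) := {r | r.1.1 < r.2.1 ∧ r.2.1 + r.2.2 ≤ r.1.2} with hD₁
  set D₂ : Set ((ℝ × ℝ) × ℝ × ℝ) := {r | r.1.2 < r.2.1 ∧ r.2.1 + r.2.2 ≤ r.1.1} with hD₂
  have hmeas : Measurable (fun r : (ℝ × ℝ) × ℝ × ℝ =>
      D₁.indicator (fun _ => (1:ℝ≥0∞)) r + D₂.indicator (fun _ => (1:ℝ≥0∞)) r) :=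
    ((measurable_const.indicator measD1).add (measurable_const.indicator measD2))
  calc ∫⁻ q, ENNReal.ofReal (|q.1 - q.2| ^ p) ∂γ
      = ∫⁻ q, ∫⁻ w, (D₁.indicator (fun _ => (1:ℝ≥0∞)) (q, w)
          + D₂.indicator (fun _ => (1:ℝ≥0∞)) (q, w)) ∂π ∂γ := by
        apply lintegral_congr
        intro q
        have hf1 : Measurable (fun w : ℝ × ℝ => D₁.indicator (fun _ => (1:ℝ≥0∞)) (q, w)) :=
          (measurable_const.indicator measD1).comp measurable_prodMk_left
        rw [lintegral_add_left hf1]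
        rw [lintegral_indicator_section_right _ measD1 q,
          lintegral_indicator_section_right _ measD2 q]
        exact pointwise_identity hp q
    _ = ∫⁻ w, ∫⁻ q, (D₁.indicator (fun _ => (1:ℝ≥0∞)) (q, w)
          + D₂.indicator (fun _ => (1:ℝ≥0∞)) (q, w)) ∂γ ∂π :=
        lintegral_lintegral_swap hmeas.aemeasurable
    _ = ∫⁻ w, (γ {q : ℝ × ℝ | q.1 < w.1 ∧ w.1 + w.2 ≤ q.2}
          + γ {q : ℝ × ℝ | q.2 < w.1 ∧ w.1 + w.2 ≤ q.1}) ∂π := by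
        apply lintegral_congr
        intro w
        have hf1 : Measurable (fun q : ℝ × ℝ => D₁.indicator (fun _ => (1:ℝ≥0∞)) (q, w)) :=
          (measurable_const.indicator measD1).comp measurable_prodMk_right
        rw [lintegral_add_left hf1]
        rw [lintegral_indicator_section_left _ measD1 w,
          lintegral_indicator_section_left _ measD2 w]
        rfl

/-- Lower bound for any coupling. -/
lemma coupling_lower_bound (μ ν : Measure ℝ) (γ : Measure (ℝ × ℝ))
    (hγ1 : γ.map Prod.fst = μ) (hγ2 : γ.map Prod.snd = ν) (t u : ℝ) :
    μ (Iio t) - ν (Iio u) ≤ γ {q : ℝ × ℝ | q.1 < t ∧ u ≤ q.2} := by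
  subst hγ1 hγ2
  rw [Measure.map_apply measurable_fst measurableSet_Iio,
    Measure.map_apply measurable_snd measurableSet_Iio]
  refine le_trans (le_measure_diff) (measure_mono ?_)
  rintro ⟨a, b⟩ ⟨h1, h2⟩
  simp only [mem_preimage, mem_Iio] at h1 h2
  exact ⟨h1, not_lt.1 h2⟩

/-- Lower bound for any coupling, second coordinate version. -/
lemma coupling_lower_bound' (μ ν : Measure ℝ) (γ : Measure (ℝ × ℝ))
    (hγ1 : γ.map Prod.fst = μ) (hγ2 : γ.map Prod.snd = ν) (t u : ℝ) :
    ν (Iio t) - μ (Iio u) ≤ γ {q : ℝ × ℝ | q.2 < t ∧ u ≤ q.1} := by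
  subst hγ1 hγ2
  rw [Measure.map_apply measurable_snd measurableSet_Iio,
    Measure.map_apply measurable_fst measurableSet_Iio]
  refine le_trans (le_measure_diff) (measure_mono ?_)
  rintro ⟨a, b⟩ ⟨h1, h2⟩
  simp only [mem_preimage, mem_Iio] at h1 h2
  exact ⟨h1, not_lt.1 h2⟩

end Coupling

section QuantileCoupling

variable (μ : Measure ℝ) [IsProbabilityMeasure μ]

lemma le_toReal_Iio_of_quantile_lt {z t : ℝ} (hz : z ∈ Ioo (0:ℝ) 1) (h : quantile μ z < t) :
    z ≤ (μ (Iio t)).toReal := by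
  calc z ≤ cdf μ (quantile μ z) := le_cdf_quantile μ hz.1 hz.2
    _ = (μ (Iic (quantile μ z))).toReal := cdf_eq_real μ _
    _ ≤ (μ (Iio t)).toReal :=
        ENNReal.toReal_mono (measure_ne_top μ _) (measure_mono (Iic_subset_Iio.2 h))

lemma quantile_lt_of_lt_toReal_Iio {z t : ℝ} (hz : z ∈ Ioo (0:ℝ) 1)
    (h : z < (μ (Iio t)).toReal) : quantile μ z < t := by
  have hunion : Iio t = ⋃ n : ℕ, Iic (t - 1/(n+1)) := by
    ext u
    simp only [mem_Iio, mem_iUnion, mem_Iic]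
    constructor
    · intro hu
      obtain ⟨n, hn⟩ := exists_nat_gt (1 / (t - u))
      refine ⟨n, ?_⟩
      rw [div_lt_iff₀ (by linarith)] at hn
      have h2 : (1:ℝ)/(n+1) ≤ t - u := by
        rw [div_le_iff₀ (by positivity)]
        nlinarith
      linarith
    · rintro ⟨n, hn⟩
      have h0 : (0:ℝ) < 1/((n:ℝ)+1) := by positivity
      linarith
  have hmono : Monotone (fun n : ℕ => Iic (t - 1/((n:ℝ)+1))) := by
    intro m n hmn
    apply Iic_subset_Iic.2
    have : (1:ℝ)/((n:ℝ)+1) ≤ 1/((m:ℝ)+1) := by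
      apply one_div_le_one_div_of_le (by positivity)
      exact_mod_cast add_le_add_left (Nat.cast_le.2 hmn) 1
    linarith
  have hsup : μ (Iio t) = ⨆ n : ℕ, μ (Iic (t - 1/((n:ℝ)+1))) := by
    rw [hunion]
    exact Directed.measure_iUnion hmono.directed_le
  have hz' : ENNReal.ofReal z < μ (Iio t) :=
    (ENNReal.ofReal_lt_iff_lt_toReal hz.1.le (measure_ne_top μ _)).2 h
  rw [hsup, lt_iSup_iff] at hz'
  obtain ⟨n, hn⟩ := hz'
  have hzle : z ≤ cdf μ (t - 1/((n:ℝ)+1)) := by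
    rw [cdf_eq_real]
    exact ((ENNReal.ofReal_lt_iff_lt_toReal hz.1.le (measure_ne_top μ _)).1 hn).le
  have := (quantile_le_iff μ hz.1 hz.2).2 hzle
  have h0 : (0:ℝ) < 1/((n:ℝ)+1) := by positivity
  linarith

variable (ν : Measure ℝ) [IsProbabilityMeasure ν]

lemma quantile_section_volume (t u : ℝ) :
    volume ((fun z => (quantile μ z, quantile ν z)) ⁻¹'
        {q : ℝ × ℝ | q.1 < t ∧ u ≤ q.2} ∩ Ioo (0:ℝ) 1)
      = μ (Iio t) - ν (Iio u) := by
  set a := (μ (Iio t)).toReal with ha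
  set b := (ν (Iio u)).toReal with hb
  have ha0 : 0 ≤ a := ENNReal.toReal_nonneg
  have ha1 : a ≤ 1 := by
    rw [ha]
    apply ENNReal.toReal_le_of_le_ofReal one_pos.le
    simpa using prob_le_one (μ := μ)
  have hb0 : 0 ≤ b := ENNReal.toReal_nonneg
  have hb1 : b ≤ 1 := by
    rw [hb]
    apply ENNReal.toReal_le_of_le_ofReal one_pos.le
    simpa using prob_le_one (μ := ν)
  have hrhs : μ (Iio t) - ν (Iio u) = ENNReal.ofReal (a - b) := by
    rcases le_total (μ (Iio t)) (ν (Iio u)) with hle | hle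
    · rw [tsub_eq_zero_of_le hle]
      rw [eq_comm, ENNReal.ofReal_eq_zero, sub_nonpos]
      exact ENNReal.toReal_mono (measure_ne_top ν _) hle
    · have h1 : (μ (Iio t) - ν (Iio u)).toReal = a - b :=
        ENNReal.toReal_sub_of_le hle (measure_ne_top μ _)
      rw [← h1, ENNReal.ofReal_toReal]
      exact ne_top_of_le_ne_top (measure_ne_top μ _) tsub_le_self
  rw [hrhs]
  apply le_antisymm
  · -- upper bound : E ⊆ Icc b a
    refine le_trans (measure_mono ?_) (le_of_eq (Real.volume_Icc))
    rintro z ⟨hz, hz01⟩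
    simp only [mem_preimage, mem_setOf_eq] at hz
    constructor
    · by_contra hc
      push_neg at hc
      have hq : quantile ν z < u := quantile_lt_of_lt_toReal_Iio ν hz01 hc
      exact absurd hz.2 (not_le.2 hq)
    · exact le_toReal_Iio_of_quantile_lt μ hz01 hz.1
  · -- lower bound : Ioo b a ⊆ E
    rw [← Real.volume_Ioo]
    apply measure_mono
    rintro z ⟨hbz, hza⟩
    have hz01 : z ∈ Ioo (0:ℝ) 1 := ⟨lt_of_le_of_lt hb0 hbz, lt_of_lt_of_le hza ha1⟩
    refine ⟨?_, hz01⟩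
    simp only [mem_preimage, mem_setOf_eq]
    constructor
    · exact quantile_lt_of_lt_toReal_Iio μ hz01 hza
    · by_contra hc
      push_neg at hc
      exact absurd (le_toReal_Iio_of_quantile_lt ν hz01 hc) (not_le.2 hbz)

end QuantileCoupling

section Main


/-- The quantile (monotone) coupling of two measures on `ℝ`. -/
noncomputable def qcoupling (μ ν : Measure ℝ) : Measure (ℝ × ℝ) :=
  Measure.map (fun z => (quantile μ z, quantile ν z)) (volume.restrict (Ioo 0 1))

variable (μ ν : Measure ℝ) [IsProbabilityMeasure μ] [IsProbabilityMeasure ν]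

lemma measurable_qpair : Measurable (fun z => (quantile μ z, quantile ν z)) :=
  (measurable_quantile μ).prodMk (measurable_quantile ν)

instance : IsProbabilityMeasure (volume.restrict (Ioo (0:ℝ) 1)) := by
  constructor
  rw [Measure.restrict_apply_univ, Real.volume_Ioo]
  norm_num

instance : IsProbabilityMeasure (qcoupling μ ν) :=
  Measure.isProbabilityMeasure_map (measurable_qpair μ ν).aemeasurable

lemma qcoupling_fst : (qcoupling μ ν).map Prod.fst = μ := by
  rw [qcoupling, Measure.map_map measurable_fst (measurable_qpair μ ν)]
  exact map_quantile μ

lemma qcoupling_snd : (qcoupling μ ν).map Prod.snd = ν := by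
  rw [qcoupling, Measure.map_map measurable_snd (measurable_qpair μ ν)]
  exact map_quantile ν

lemma qcoupling_A (t u : ℝ) :
    qcoupling μ ν {q : ℝ × ℝ | q.1 < t ∧ u ≤ q.2} = μ (Iio t) - ν (Iio u) := by
  have hA : MeasurableSet {q : ℝ × ℝ | q.1 < t ∧ u ≤ q.2} :=
    (measurableSet_lt measurable_fst measurable_const).inter
      (measurableSet_le measurable_const measurable_snd)
  rw [qcoupling, Measure.map_apply (measurable_qpair μ ν) hA,
    Measure.restrict_apply (measurable_qpair μ ν hA)]
  exact quantile_section_volume μ ν t u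

lemma qcoupling_B (t u : ℝ) :
    qcoupling μ ν {q : ℝ × ℝ | q.2 < t ∧ u ≤ q.1} = ν (Iio t) - μ (Iio u) := by
  have hB : MeasurableSet {q : ℝ × ℝ | q.2 < t ∧ u ≤ q.1} :=
    (measurableSet_lt measurable_snd measurable_const).inter
      (measurableSet_le measurable_const measurable_fst)
  rw [qcoupling, Measure.map_apply (measurable_qpair μ ν) hB,
    Measure.restrict_apply (measurable_qpair μ ν hB)]
  exact quantile_section_volume ν μ t u

lemma measurable_cost {p : ℝ} (hp : 1 ≤ p) :
    Measurable (fun q : ℝ × ℝ => ENNReal.ofReal (|q.1 - q.2| ^ p)) := by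
  have hc : Continuous fun u : ℝ => u ^ p :=
    continuous_iff_continuousAt.2
      (fun u => Real.continuousAt_rpow_const u p (Or.inr (by linarith)))
  exact (hc.comp ((continuous_fst.sub continuous_snd).abs)).measurable.ennreal_ofReal

lemma cost_qcoupling {p : ℝ} (hp : 1 ≤ p) :
    ∫⁻ q, ENNReal.ofReal (|q.1 - q.2| ^ p) ∂(qcoupling μ ν)
      = ∫⁻ z in Ioo (0:ℝ) 1, ENNReal.ofReal (|quantile μ z - quantile ν z| ^ p) := by
  rw [qcoupling, lintegral_map (measurable_cost hp) (measurable_qpair μ ν)]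

lemma cost_qcoupling_le {p : ℝ} (hp : 1 ≤ p) (γ : Measure (ℝ × ℝ))
    [IsProbabilityMeasure γ] (hγ1 : γ.map Prod.fst = μ) (hγ2 : γ.map Prod.snd = ν) :
    ∫⁻ q, ENNReal.ofReal (|q.1 - q.2| ^ p) ∂(qcoupling μ ν)
      ≤ ∫⁻ q, ENNReal.ofReal (|q.1 - q.2| ^ p) ∂γ := by
  rw [cost_eq_lintegral_prod hp γ, cost_eq_lintegral_prod hp (qcoupling μ ν)]
  apply lintegral_mono
  intro w
  dsimp only
  rw [qcoupling_A μ ν, qcoupling_B μ ν]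
  exact add_le_add (coupling_lower_bound μ ν γ hγ1 hγ2 _ _)
    (coupling_lower_bound' μ ν γ hγ1 hγ2 _ _)

/-- Closed-form quantile formula for the one-dimensional `p`-Wasserstein distance. -/
theorem wasserstein_one_dim_quantile_formula
    (p : ℝ) (hp : 1 ≤ p) (μ ν : Measure ℝ)
    [IsProbabilityMeasure μ] [IsProbabilityMeasure ν]
    (hμ : ∫⁻ x, ENNReal.ofReal (|x| ^ p) ∂μ < ∞)
    (hν : ∫⁻ x, ENNReal.ofReal (|x| ^ p) ∂ν < ∞) :
    wassersteinDist p μ ν ^ p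
      = ∫⁻ z in Set.Ioo (0 : ℝ) 1,
          ENNReal.ofReal (|quantile μ z - quantile ν z| ^ p) := by
  have hp0 : p ≠ 0 := by linarith
  have key : (⨅ γ ∈ {γ : Measure (ℝ × ℝ) | IsProbabilityMeasure γ ∧
      γ.map Prod.fst = μ ∧ γ.map Prod.snd = ν},
      ∫⁻ q, ENNReal.ofReal (dist q.1 q.2 ^ p) ∂γ)
      = ∫⁻ z in Set.Ioo (0 : ℝ) 1,
          ENNReal.ofReal (|quantile μ z - quantile ν z| ^ p) := by
    have hcost : ∀ γ : Measure (ℝ × ℝ), (∫⁻ q, ENNReal.ofReal (dist q.1 q.2 ^ p) ∂γ)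
        = ∫⁻ q, ENNReal.ofReal (|q.1 - q.2| ^ p) ∂γ := by
      intro γ
      apply lintegral_congr
      intro q
      rw [Real.dist_eq]
    apply le_antisymm
    · calc (⨅ γ ∈ {γ : Measure (ℝ × ℝ) | IsProbabilityMeasure γ ∧
          γ.map Prod.fst = μ ∧ γ.map Prod.snd = ν},
          ∫⁻ q, ENNReal.ofReal (dist q.1 q.2 ^ p) ∂γ)
          ≤ ∫⁻ q, ENNReal.ofReal (dist q.1 q.2 ^ p) ∂(qcoupling μ ν) :=
            iInf₂_le (qcoupling μ ν)
              ⟨inferInstance, qcoupling_fst μ ν, qcoupling_snd μ ν⟩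
        _ = _ := by rw [hcost, cost_qcoupling μ ν hp]
    · apply le_iInf₂
      intro γ hγ
      obtain ⟨hγp, hγ1, hγ2⟩ := hγ
      rw [hcost, ← cost_qcoupling μ ν hp]
      exact cost_qcoupling_le μ ν hp γ hγ1 hγ2
  rw [wassersteinDist, key, ← ENNReal.rpow_mul, one_div, inv_mul_cancel₀ hp0,
    ENNReal.rpow_one]

end Main
end

section
/- Sorted-samples formula for the p-Wasserstein distance between empirical measures: for p ∈ [1,∞) and real numbers x₁ ≤ x₂ ≤ … ≤ x_N and y₁ ≤ y₂ ≤ … ≤ y_N, the p-Wasserstein distance between the empirical measures μ = (1/N)∑ₙ δ_{xₙ} and ν = (1/N)∑ₙ δ_{yₙ} satisfies W_p(μ,ν)^p = (1/N)∑ₙ |xₙ − yₙ|^p. -/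
open MeasureTheory ENNReal

private lemma convexOn_abs_rpow {p : ℝ} (hp : 1 ≤ p) :
    ConvexOn ℝ Set.univ fun t : ℝ => |t| ^ p := by
  have himg : abs '' Set.univ = Set.Ici (0:ℝ) := by
    ext t
    simp only [Set.image_univ, Set.mem_range, Set.mem_Ici]
    constructor
    · rintro ⟨s, rfl⟩; exact abs_nonneg s
    · intro ht; exact ⟨t, abs_of_nonneg ht⟩
  have habs : ConvexOn ℝ Set.univ (abs : ℝ → ℝ) := by
    exact convexOn_univ_norm (E := ℝ)
  have h := (ConvexOn.comp (f := (abs : ℝ → ℝ)) (g := fun s : ℝ => s ^ p)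
    (by rw [himg]; exact convexOn_rpow hp) habs ?_)
  · exact h
  · rw [himg]
    intro s hs t ht hst
    exact Real.rpow_le_rpow hs hst (le_trans zero_le_one hp)

private lemma convex_increments {f : ℝ → ℝ} (hf : ConvexOn ℝ Set.univ f)
    {s t d : ℝ} (hst : s ≤ t) (hd : 0 ≤ d) :
    f (s + d) - f s ≤ f (t + d) - f t := by
  rcases eq_or_lt_of_le hd with rfl | hd
  · simp
  rcases eq_or_lt_of_le hst with rfl | hst
  · simp
  have h1 := hf.secant_mono_aux2 (Set.mem_univ s) (Set.mem_univ (t + d))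
    (by linarith : s < s + d) (by linarith : s + d < t + d)
  have h2 := hf.secant_mono_aux3 (Set.mem_univ s) (Set.mem_univ (t + d))
    hst (by linarith : t < t + d)
  have e1 : s + d - s = d := by ring
  have e2 : t + d - t = d := by ring
  rw [e1] at h1
  rw [e2] at h2
  have := le_trans h1 h2
  rw [div_le_div_iff₀ hd hd] at this
  nlinarith

private lemma submod {p : ℝ} (hp : 1 ≤ p) {a a' b b' : ℝ} (ha : a ≤ a') (hb : b ≤ b') :
    |a' - b'| ^ p + |a - b| ^ p ≤ |a - b'| ^ p + |a' - b| ^ p := by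
  have h := convex_increments (convexOn_abs_rpow hp) (s := a - b') (t := a' - b')
    (d := b' - b) (by linarith) (by linarith)
  have e1 : a - b' + (b' - b) = a - b := by ring
  have e2 : a' - b' + (b' - b) = a' - b := by ring
  rw [e1, e2] at h
  linarith

/-- The discrete dual potential on the second marginal. -/
private noncomputable def WDv (p : ℝ) (X Y : ℕ → ℝ) (n : ℕ) : ℝ :=
  ∑ k ∈ Finset.range n, (|X (k+1) - Y (k+1)| ^ p - |X (k+1) - Y k| ^ p)

private lemma WDv_key {p : ℝ} (hp : 1 ≤ p) {X Y : ℕ → ℝ} (hX : Monotone X) (hY : Monotone Y)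
    (n m : ℕ) :
    |X n - Y n| ^ p - WDv p X Y n ≤ |X n - Y m| ^ p - WDv p X Y m := by
  set c : ℝ → ℝ → ℝ := fun a b => |a - b| ^ p with hc
  have tele : ∀ i j : ℕ, i ≤ j →
      ∑ k ∈ Finset.Ico i j, (c (X n) (Y (k+1)) - c (X n) (Y k))
        = c (X n) (Y j) - c (X n) (Y i) := by
    intro i j hij
    rw [Finset.sum_Ico_eq_sub _ hij, Finset.sum_range_sub (fun k => c (X n) (Y k)),
      Finset.sum_range_sub (fun k => c (X n) (Y k))]
    ring
  rcases le_total m n with hmn | hnm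
  · have hv : WDv p X Y n - WDv p X Y m
        = ∑ k ∈ Finset.Ico m n, (c (X (k+1)) (Y (k+1)) - c (X (k+1)) (Y k)) := by
      rw [Finset.sum_Ico_eq_sub _ hmn]; rfl
    have hs : ∑ k ∈ Finset.Ico m n, (c (X n) (Y (k+1)) - c (X n) (Y k))
        ≤ ∑ k ∈ Finset.Ico m n, (c (X (k+1)) (Y (k+1)) - c (X (k+1)) (Y k)) := by
      apply Finset.sum_le_sum
      intro k hk
      rw [Finset.mem_Ico] at hk
      have h := submod hp (a := X (k+1)) (a' := X n) (b := Y k) (b' := Y (k+1))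
        (hX (by omega)) (hY (by omega))
      simp only [hc]; linarith
    rw [tele m n hmn] at hs
    linarith [hs, hv.symm.le, hv.le]
  · have hv : WDv p X Y m - WDv p X Y n
        = ∑ k ∈ Finset.Ico n m, (c (X (k+1)) (Y (k+1)) - c (X (k+1)) (Y k)) := by
      rw [Finset.sum_Ico_eq_sub _ hnm]; rfl
    have hs : ∑ k ∈ Finset.Ico n m, (c (X (k+1)) (Y (k+1)) - c (X (k+1)) (Y k))
        ≤ ∑ k ∈ Finset.Ico n m, (c (X n) (Y (k+1)) - c (X n) (Y k)) := by
      apply Finset.sum_le_sum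
      intro k hk
      rw [Finset.mem_Ico] at hk
      have h := submod hp (a := X n) (a' := X (k+1)) (b := Y k) (b' := Y (k+1))
        (hX (by omega)) (hY (by omega))
      simp only [hc]; linarith
    rw [tele n m hnm] at hs
    linarith [hv.le, hv.symm.le]

private lemma measurable_finset_inf' {ι : Type*} (s : Finset ι) (hs : s.Nonempty)
    (f : ι → ℝ → ℝ) (hf : ∀ i, Measurable (f i)) :
    Measurable fun a => s.inf' hs fun i => f i a := by
  induction hs using Finset.Nonempty.cons_induction with
  | singleton i => simpa using hf i
  | cons i s hi hs ih => simp only [Finset.inf'_cons (H := hs)]; exact (hf i).min ih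

/-- A measurable function on `ℝ` interpolating the dual potential values. -/
private noncomputable def WDV (Y : ℕ → ℝ) (v : ℕ → ℝ) (N : ℕ) (b : ℝ) : ℝ :=
  ∑ m ∈ Finset.range N,
    Set.indicator {b' | Y m = b' ∧ ∀ k < m, Y k ≠ b'} (fun _ => v m) b

private lemma measurable_WDV (Y : ℕ → ℝ) (v : ℕ → ℝ) (N : ℕ) :
    Measurable (WDV Y v N) := by
  apply Finset.measurable_sum
  intro m _
  apply Measurable.indicator measurable_const
  apply Set.Subsingleton.measurableSet
  intro b1 hb1 b2 hb2
  rw [← hb1.1, ← hb2.1]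

private lemma WDV_apply {Y : ℕ → ℝ} {v : ℕ → ℝ}
    (hv : ∀ i j, i ≤ j → Y i = Y j → v i = v j) {N n : ℕ} (hn : n < N) :
    WDV Y v N (Y n) = v n := by
  have hex : ∃ m, Y m = Y n := ⟨n, rfl⟩
  set m₀ := Nat.find hex with hm₀
  have hYm₀ : Y m₀ = Y n := Nat.find_spec hex
  have hmin : ∀ k < m₀, Y k ≠ Y n := fun k hk => Nat.find_min hex hk
  have hm₀n : m₀ ≤ n := Nat.find_le rfl
  rw [WDV, Finset.sum_eq_single_of_mem m₀ (Finset.mem_range.mpr (lt_of_le_of_lt hm₀n hn))]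
  · rw [Set.indicator_of_mem
      (show Y n ∈ {b' | Y m₀ = b' ∧ ∀ k < m₀, Y k ≠ b'} from ⟨hYm₀, hmin⟩)]
    exact hv m₀ n hm₀n hYm₀
  · intro m hm hne
    apply Set.indicator_of_notMem
    rintro ⟨h1, h2⟩
    rcases lt_or_gt_of_ne hne with h | h
    · exact hmin m h h1
    · exact h2 m₀ h hYm₀

private lemma measure_map_finset_sum {α β : Type*} [MeasurableSpace α] [MeasurableSpace β]
    {ι : Type*} (s : Finset ι) (μ : ι → Measure α) {f : α → β} (hf : Measurable f) :
    (∑ i ∈ s, μ i).map f = ∑ i ∈ s, (μ i).map f := by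
  ext A hA
  rw [Measure.map_apply hf hA, Measure.finset_sum_apply, Measure.finset_sum_apply]
  exact Finset.sum_congr rfl fun i _ => (Measure.map_apply hf hA).symm

/-- Sorted-samples formula for the `p`-Wasserstein distance between two empirical measures
with the same number of atoms: if the samples are sorted in ascending order, then
`W_p(μ,ν)^p = (1/N) ∑ₙ |xₙ − yₙ|^p`. -/
theorem wasserstein_empirical_sorted
    (p : ℝ) (hp : 1 ≤ p) (N : ℕ) (hN : 0 < N)
    (x y : Fin N → ℝ) (hx : Monotone x) (hy : Monotone y) :
    wassersteinDist p
        ((N : ℝ≥0∞)⁻¹ • ∑ n : Fin N, Measure.dirac (x n))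
        ((N : ℝ≥0∞)⁻¹ • ∑ n : Fin N, Measure.dirac (y n)) ^ p
      = (N : ℝ≥0∞)⁻¹ * ∑ n : Fin N, ENNReal.ofReal (|x n - y n| ^ p) := by
  classical
  have hp0 : (0:ℝ) < p := lt_of_lt_of_le one_pos hp
  set μ : Measure ℝ := (N : ℝ≥0∞)⁻¹ • ∑ n : Fin N, Measure.dirac (x n) with hμ
  set ν : Measure ℝ := (N : ℝ≥0∞)⁻¹ • ∑ n : Fin N, Measure.dirac (y n) with hν
  set R : ℝ≥0∞ := (N : ℝ≥0∞)⁻¹ * ∑ n : Fin N, ENNReal.ofReal (|x n - y n| ^ p) with hR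
  -- extensions to ℕ
  set X : ℕ → ℝ := fun k => x ⟨min k (N-1), by omega⟩ with hX
  set Y : ℕ → ℝ := fun k => y ⟨min k (N-1), by omega⟩ with hY
  have hXmono : Monotone X := fun i j hij => hx (by simp [Fin.le_def]; omega)
  have hYmono : Monotone Y := fun i j hij => hy (by simp [Fin.le_def]; omega)
  have hXeq : ∀ n : Fin N, X n.1 = x n := by
    intro n
    have : (⟨min n.1 (N-1), by omega⟩ : Fin N) = n := by
      apply Fin.ext; simp; omega
    simp only [hX, this]
  have hYeq : ∀ n : Fin N, Y n.1 = y n := by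
    intro n
    have : (⟨min n.1 (N-1), by omega⟩ : Fin N) = n := by
      apply Fin.ext; simp; omega
    simp only [hY, this]
  set v : ℕ → ℝ := WDv p X Y with hv
  have key : ∀ n m : ℕ, |X n - Y n| ^ p - v n ≤ |X n - Y m| ^ p - v m :=
    WDv_key hp hXmono hYmono
  have hvconst : ∀ i j, i ≤ j → Y i = Y j → v i = v j := by
    intro i j hij hYij
    have hsub : v j - v i = ∑ k ∈ Finset.Ico i j,
        (|X (k+1) - Y (k+1)| ^ p - |X (k+1) - Y k| ^ p) := by
      rw [Finset.sum_Ico_eq_sub _ hij]; rfl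
    have hz : ∀ k ∈ Finset.Ico i j,
        (|X (k+1) - Y (k+1)| ^ p - |X (k+1) - Y k| ^ p) = 0 := by
      intro k hk
      rw [Finset.mem_Ico] at hk
      have h1 : Y k = Y i :=
        le_antisymm ((hYmono (show k ≤ j by omega)).trans hYij.ge) (hYmono hk.1)
      have h2 : Y (k+1) = Y i :=
        le_antisymm ((hYmono (show k+1 ≤ j by omega)).trans hYij.ge)
          (hYmono (show i ≤ k+1 by omega))
      rw [h1, h2, sub_self]
    rw [Finset.sum_eq_zero hz] at hsub
    linarith
  -- the c-transform dual potential
  set U : ℝ → ℝ := fun a => (Finset.range N).inf' ⟨0, Finset.mem_range.mpr hN⟩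
      (fun m => |a - Y m| ^ p - v m) with hU
  have hUmeas : Measurable U := by
    apply measurable_finset_inf'
    intro m
    exact ((measurable_id.sub measurable_const).abs.pow measurable_const).sub measurable_const
  have hUle : ∀ (a : ℝ) (m : ℕ), m < N → U a ≤ |a - Y m| ^ p - v m := by
    intro a m hm
    exact Finset.inf'_le _ (Finset.mem_range.mpr hm)
  have hUeq : ∀ n : ℕ, n < N → U (X n) = |X n - Y n| ^ p - v n := by
    intro n hn
    refine le_antisymm (hUle _ n hn) ?_
    exact Finset.le_inf' _ _ fun m _ => key n m
  set V : ℝ → ℝ := WDV Y v N with hV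
  have hVmeas : Measurable V := measurable_WDV Y v N
  have hVeq : ∀ n : ℕ, n < N → V (Y n) = v n := fun n hn => WDV_apply hvconst hn
  -- the shift constant
  set K : ℝ := ∑ n ∈ Finset.range N, (|v n| + |(|X n - Y n| ^ p)|) with hK
  have hKb : ∀ n : ℕ, n < N → |v n| + |(|X n - Y n| ^ p)| ≤ K := by
    intro n hn
    apply Finset.single_le_sum (fun i _ => by positivity) (Finset.mem_range.mpr hn)
  have hK0 : (0:ℝ) ≤ K := Finset.sum_nonneg fun i _ => by positivity
  have hUK : ∀ n : ℕ, n < N → 0 ≤ U (X n) + K := by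
    intro n hn
    have h1 := hUeq n hn
    have h2 := hKb n hn
    have h3 : (0:ℝ) ≤ |X n - Y n| ^ p := Real.rpow_nonneg (abs_nonneg _) p
    have := abs_le.mp (le_refl |v n|)
    rw [h1]
    have := neg_abs_le (v n)
    nlinarith [abs_nonneg (|X n - Y n| ^ p), abs_nonneg (v n)]
  have hVK : ∀ n : ℕ, n < N → 0 ≤ V (Y n) + K := by
    intro n hn
    rw [hVeq n hn]
    have h2 := hKb n hn
    have := neg_abs_le (v n)
    nlinarith [abs_nonneg (|X n - Y n| ^ p)]
  -- lintegral over empirical measures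
  have hNne : (N : ℝ≥0∞) ≠ 0 := Nat.cast_ne_zero.mpr hN.ne'
  have hNnetop : (N : ℝ≥0∞) ≠ ⊤ := natCast_ne_top N
  have hlintμ : ∀ f : ℝ → ℝ≥0∞,
      ∫⁻ a, f a ∂μ = (N : ℝ≥0∞)⁻¹ * ∑ n : Fin N, f (x n) := by
    intro f
    rw [hμ, lintegral_smul_measure, lintegral_finset_sum_measure]
    simp [lintegral_dirac]
  have hlintν : ∀ f : ℝ → ℝ≥0∞,
      ∫⁻ a, f a ∂ν = (N : ℝ≥0∞)⁻¹ * ∑ n : Fin N, f (y n) := by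
    intro f
    rw [hν, lintegral_smul_measure, lintegral_finset_sum_measure]
    simp [lintegral_dirac]
  -- measurability of the cost
  have hgmeas : Measurable fun q : ℝ × ℝ => ENNReal.ofReal (dist q.1 q.2 ^ p) :=
    ((measurable_fst.dist measurable_snd).pow measurable_const).ennreal_ofReal
  -- the lower bound for any coupling
  have lower : ∀ γ : Measure (ℝ × ℝ), IsProbabilityMeasure γ →
      γ.map Prod.fst = μ → γ.map Prod.snd = ν →
      R ≤ ∫⁻ q, ENNReal.ofReal (dist q.1 q.2 ^ p) ∂γ := by
    intro γ hγprob hfst hsnd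
    -- a.e. support
    have hsupp : ∀ᵐ q ∂γ, q.1 ∈ Set.range x ∧ q.2 ∈ Set.range y := by
      have h1 : γ (Prod.fst ⁻¹' (Set.range x)ᶜ) = 0 := by
        rw [← Measure.map_apply measurable_fst ((Set.finite_range x).measurableSet.compl),
          hfst, hμ, Measure.smul_apply, Measure.finset_sum_apply]
        have hz : ∀ n : Fin N, Measure.dirac (x n) ((Set.range x)ᶜ) = 0 := by
          intro n
          rw [Measure.dirac_apply]
          exact Set.indicator_of_notMem (by simp) _
        simp [hz]
      have h2 : γ (Prod.snd ⁻¹' (Set.range y)ᶜ) = 0 := by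
        rw [← Measure.map_apply measurable_snd ((Set.finite_range y).measurableSet.compl),
          hsnd, hν, Measure.smul_apply, Measure.finset_sum_apply]
        have hz : ∀ n : Fin N, Measure.dirac (y n) ((Set.range y)ᶜ) = 0 := by
          intro n
          rw [Measure.dirac_apply]
          exact Set.indicator_of_notMem (by simp) _
        simp [hz]
      rw [ae_iff]
      apply measure_mono_null _ (measure_union_null h1 h2)
      intro q hq
      simp only [Set.mem_setOf_eq, not_and_or] at hq
      rcases hq with hq | hq
      · exact Or.inl hq
      · exact Or.inr hq
    set A := ∫⁻ q, ENNReal.ofReal (U q.1 + K) ∂γ with hA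
    set B := ∫⁻ q, ENNReal.ofReal (V q.2 + K) ∂γ with hB
    set I := ∫⁻ q, ENNReal.ofReal (dist q.1 q.2 ^ p) ∂γ with hI
    set cK := ENNReal.ofReal (2 * K) with hcK
    have hmeasA : Measurable fun q : ℝ × ℝ => ENNReal.ofReal (U q.1 + K) :=
      (((hUmeas.comp measurable_fst)).add_const K).ennreal_ofReal
    have hmeasB : Measurable fun q : ℝ × ℝ => ENNReal.ofReal (V q.2 + K) :=
      (((hVmeas.comp measurable_snd)).add_const K).ennreal_ofReal
    have step1 : A + B ≤ I + cK := by
      rw [hA, hB, ← lintegral_add_left hmeasA]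
      have hpt : ∀ᵐ q ∂γ, ENNReal.ofReal (U q.1 + K) + ENNReal.ofReal (V q.2 + K)
          ≤ ENNReal.ofReal (dist q.1 q.2 ^ p) + cK := by
        filter_upwards [hsupp] with q hq
        obtain ⟨⟨n, hn⟩, ⟨m, hm⟩⟩ := hq
        have hq1 : q.1 = X n.1 := by rw [hXeq n, hn]
        have hq2 : q.2 = Y m.1 := by rw [hYeq m, hm]
        have hU0 : 0 ≤ U q.1 + K := by rw [hq1]; exact hUK n.1 n.isLt
        have hV0 : 0 ≤ V q.2 + K := by rw [hq2]; exact hVK m.1 m.isLt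
        have hsum : U q.1 + V q.2 ≤ |q.1 - q.2| ^ p := by
          have h1 := hUle q.1 m.1 m.isLt
          have h2 : V q.2 = v m.1 := by rw [hq2]; exact hVeq m.1 m.isLt
          rw [h2]
          rw [← hq2] at h1
          linarith
        have hd : dist q.1 q.2 ^ p = |q.1 - q.2| ^ p := by rw [Real.dist_eq]
        rw [← ENNReal.ofReal_add hU0 hV0, hd, hcK, ← ENNReal.ofReal_add
          (Real.rpow_nonneg (abs_nonneg _) p) (by linarith)]
        apply ENNReal.ofReal_le_ofReal
        linarith
      calc ∫⁻ q, (ENNReal.ofReal (U q.1 + K) + ENNReal.ofReal (V q.2 + K)) ∂γ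
          ≤ ∫⁻ q, (ENNReal.ofReal (dist q.1 q.2 ^ p) + cK) ∂γ := lintegral_mono_ae hpt
        _ = I + cK := by
            rw [lintegral_add_right _ measurable_const, lintegral_const, measure_univ, mul_one]
    have stepA : A = (N : ℝ≥0∞)⁻¹ * ∑ n : Fin N, ENNReal.ofReal (U (x n) + K) := by
      have hmap : ∫⁻ a, ENNReal.ofReal (U a + K) ∂(γ.map Prod.fst)
          = ∫⁻ q, ENNReal.ofReal (U q.1 + K) ∂γ :=
        lintegral_map ((hUmeas.add_const K).ennreal_ofReal) measurable_fst
      rw [hA, ← hmap, hfst, hlintμ]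
    have stepB : B = (N : ℝ≥0∞)⁻¹ * ∑ n : Fin N, ENNReal.ofReal (V (y n) + K) := by
      have hmap : ∫⁻ a, ENNReal.ofReal (V a + K) ∂(γ.map Prod.snd)
          = ∫⁻ q, ENNReal.ofReal (V q.2 + K) ∂γ :=
        lintegral_map ((hVmeas.add_const K).ennreal_ofReal) measurable_snd
      rw [hB, ← hmap, hsnd, hlintν]
    have stepAB : A + B = R + cK := by
      rw [stepA, stepB, ← mul_add, ← Finset.sum_add_distrib]
      have hterm : ∀ n : Fin N,
          ENNReal.ofReal (U (x n) + K) + ENNReal.ofReal (V (y n) + K)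
            = ENNReal.ofReal (|x n - y n| ^ p) + cK := by
        intro n
        have h1 : U (x n) = |x n - y n| ^ p - v n.1 := by
          have h := hUeq n.1 n.isLt
          rw [hXeq n, hYeq n] at h
          exact h
        have h2 : V (y n) = v n.1 := by rw [← hYeq n]; exact hVeq n.1 n.isLt
        have hU0 : 0 ≤ U (x n) + K := by rw [← hXeq n]; exact hUK n.1 n.isLt
        have hV0 : 0 ≤ V (y n) + K := by rw [← hYeq n]; exact hVK n.1 n.isLt
        rw [← ENNReal.ofReal_add hU0 hV0, hcK,
          ← ENNReal.ofReal_add (Real.rpow_nonneg (abs_nonneg _) p) (by linarith)]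
        congr 1
        rw [h1, h2]; ring
      rw [Finset.sum_congr rfl fun n _ => hterm n, Finset.sum_add_distrib, mul_add, hR]
      congr 1
      rw [Finset.sum_const, Finset.card_univ, Fintype.card_fin, nsmul_eq_mul,
        ← mul_assoc, ENNReal.inv_mul_cancel hNne hNnetop, one_mul]
    have final : R + cK ≤ I + cK := by rw [← stepAB]; exact step1
    exact (ENNReal.add_le_add_iff_right ofReal_ne_top).mp final
  -- the optimal coupling
  set γ₀ : Measure (ℝ × ℝ) := (N : ℝ≥0∞)⁻¹ • ∑ n : Fin N, Measure.dirac (x n, y n) with hγ₀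
  have hγ₀prob : IsProbabilityMeasure γ₀ := by
    constructor
    rw [hγ₀, Measure.smul_apply, Measure.finset_sum_apply]
    simp [measure_univ, ENNReal.inv_mul_cancel hNne hNnetop]
  have hγ₀fst : γ₀.map Prod.fst = μ := by
    rw [hγ₀, Measure.map_smul, measure_map_finset_sum _ _ measurable_fst, hμ]
    congr 1
    exact Finset.sum_congr rfl fun n _ => Measure.map_dirac' measurable_fst _
  have hγ₀snd : γ₀.map Prod.snd = ν := by
    rw [hγ₀, Measure.map_smul, measure_map_finset_sum _ _ measurable_snd, hν]
    congr 1
    exact Finset.sum_congr rfl fun n _ => Measure.map_dirac' measurable_snd _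
  have hγ₀int : ∫⁻ q, ENNReal.ofReal (dist q.1 q.2 ^ p) ∂γ₀ = R := by
    rw [hγ₀, lintegral_smul_measure, lintegral_finset_sum_measure, hR]
    congr 1
    apply Finset.sum_congr rfl
    intro n _
    rw [lintegral_dirac]
    simp [Real.dist_eq]
  -- the infimum equals R
  have hinf : (⨅ γ ∈ {γ : Measure (ℝ × ℝ) | IsProbabilityMeasure γ ∧
      γ.map Prod.fst = μ ∧ γ.map Prod.snd = ν},
      ∫⁻ q, ENNReal.ofReal (dist q.1 q.2 ^ p) ∂γ) = R := by
    apply le_antisymm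
    · exact le_trans (iInf₂_le γ₀ ⟨hγ₀prob, hγ₀fst, hγ₀snd⟩) hγ₀int.le
    · exact le_iInf₂ fun γ hγ => lower γ hγ.1 hγ.2.1 hγ.2.2
  unfold wassersteinDist
  rw [hinf, ← ENNReal.rpow_mul, one_div_mul_cancel (ne_of_gt hp0), ENNReal.rpow_one]
end

section
/- The sliced p-Wasserstein distance separates probability measures: for p ∈ [1,∞) and Borel probability measures μ, ν on ℝ^d with finite p-th moment, if SW_p(μ,ν) = 0, i.e., the p-Wasserstein distance between the pushforwards of μ and ν under x ↦ ⟨θ, x⟩ vanishes for almost every θ with respect to the uniform measure on the unit sphere S^{d−1}, then μ = ν. -/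
open MeasureTheory ENNReal

set_option maxHeartbeats 1000000

open NNReal Filter Topology Metric Set Real
open scoped FourierTransform RealInnerProductSpace

section Helpers

open scoped Manifold ContDiff

lemma nnreal_le_add_edist (a b : ℝ≥0) : (a : ℝ≥0∞) ≤ (b : ℝ≥0∞) + edist a b := by
  rw [edist_nndist]
  have : a ≤ b + nndist a b := by
    rw [NNReal.nndist_eq]
    calc a ≤ b + (a - b) := le_add_tsub
    _ ≤ b + max (a - b) (b - a) := by gcongr; exact le_max_left _ _
  exact_mod_cast this

section OneD

variable {X : Type*} [MeasurableSpace X] [PseudoMetricSpace X] [OpensMeasurableSpace X]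
  [SecondCountableTopology X]

/-- If the Wasserstein cost infimum is 0, lintegrals of bounded Lipschitz `ℝ≥0`-valued
functions agree. -/
lemma lintegral_lipschitz_eq_of_wasserstein_zero {p : ℝ} (hp : 1 ≤ p)
    {m₁ m₂ : Measure X} [IsProbabilityMeasure m₁] [IsProbabilityMeasure m₂]
    (h : wassersteinDist p m₁ m₂ = 0) {K : ℝ≥0} {f : X → ℝ≥0}
    (hf : LipschitzWith K f) (hb : ∀ x, f x ≤ 1) :
    ∫⁻ x, (f x : ℝ≥0∞) ∂m₁ = ∫⁻ x, (f x : ℝ≥0∞) ∂m₂ := by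
  have hp0 : (0:ℝ) < p := lt_of_lt_of_le one_pos hp
  have hinf : (⨅ γ ∈ {γ : Measure (X × X) | IsProbabilityMeasure γ ∧
      γ.map Prod.fst = m₁ ∧ γ.map Prod.snd = m₂},
      ∫⁻ q, ENNReal.ofReal (dist q.1 q.2 ^ p) ∂γ) = 0 := by
    unfold wassersteinDist at h
    rcases ENNReal.rpow_eq_zero_iff.1 h with ⟨h0, _⟩ | ⟨_, hneg⟩
    · exact h0
    · exfalso
      have : (0:ℝ) < 1/p := by positivity
      linarith
  have hfc : Continuous f := hf.continuous
  have hmf : Measurable fun x => (f x : ℝ≥0∞) := hfc.measurable.coe_nnreal_ennreal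
  -- main two-sided estimate
  have main : ∀ ε : ℝ≥0, 0 < ε →
      (∫⁻ x, (f x : ℝ≥0∞) ∂m₁ ≤ ∫⁻ x, (f x : ℝ≥0∞) ∂m₂ + K * ε ∧
       ∫⁻ x, (f x : ℝ≥0∞) ∂m₂ ≤ ∫⁻ x, (f x : ℝ≥0∞) ∂m₁ + K * ε) := by
    intro ε hε
    have hεp : (0:ℝ≥0∞) < (ε : ℝ≥0∞) ^ p := by
      apply ENNReal.rpow_pos (by exact_mod_cast hε) (by simp)
    have hlt : (⨅ γ ∈ {γ : Measure (X × X) | IsProbabilityMeasure γ ∧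
        γ.map Prod.fst = m₁ ∧ γ.map Prod.snd = m₂},
        ∫⁻ q, ENNReal.ofReal (dist q.1 q.2 ^ p) ∂γ) < (ε : ℝ≥0∞) ^ p := by
      rw [hinf]; exact hεp
    rw [iInf_lt_iff] at hlt
    obtain ⟨γ, hγ⟩ := hlt
    rw [iInf_lt_iff] at hγ
    obtain ⟨hγS, hcost⟩ := hγ
    obtain ⟨hγprob, hγ1, hγ2⟩ := hγS
    haveI := hγprob
    -- cost control : ∫⁻ edist ≤ ε
    have hdist : ∫⁻ q : X × X, edist q.1 q.2 ∂γ ≤ (ε : ℝ≥0∞) := by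
      set g : X × X → ℝ := fun q => dist q.1 q.2 with hg
      have hgc : Continuous g := continuous_fst.dist continuous_snd
      have h1 : ∫⁻ q : X × X, edist q.1 q.2 ∂γ = eLpNorm g 1 γ := by
        rw [eLpNorm_one_eq_lintegral_enorm]
        apply lintegral_congr
        intro q
        rw [edist_dist, ← Real.enorm_eq_ofReal dist_nonneg]
      have h2 : eLpNorm g (ENNReal.ofReal p) γ
          = (∫⁻ q, ENNReal.ofReal (dist q.1 q.2 ^ p) ∂γ) ^ (1/p) := by
        rw [eLpNorm_eq_lintegral_rpow_enorm_toReal (by simp [hp0]) (by simp),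
          ENNReal.toReal_ofReal hp0.le]
        congr 1
        apply lintegral_congr
        intro q
        rw [← ENNReal.ofReal_rpow_of_nonneg dist_nonneg hp0.le,
          Real.enorm_eq_ofReal dist_nonneg]
      have h3 : eLpNorm g 1 γ ≤ eLpNorm g (ENNReal.ofReal p) γ :=
        eLpNorm_le_eLpNorm_of_exponent_le (by simpa using ENNReal.one_le_ofReal.2 hp)
          hgc.aestronglyMeasurable
      rw [h1]
      refine h3.trans ?_
      rw [h2]
      calc (∫⁻ q, ENNReal.ofReal (dist q.1 q.2 ^ p) ∂γ) ^ (1/p)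
          ≤ ((ε : ℝ≥0∞) ^ p) ^ (1/p) := by
            exact ENNReal.rpow_le_rpow hcost.le (by positivity)
        _ = (ε : ℝ≥0∞) := by
            rw [← ENNReal.rpow_mul, mul_one_div, div_self hp0.ne', ENNReal.rpow_one]
    -- transfer lintegrals through the coupling
    have e1 : ∫⁻ x, (f x : ℝ≥0∞) ∂m₁ = ∫⁻ q : X × X, (f q.1 : ℝ≥0∞) ∂γ := by
      rw [← hγ1, lintegral_map hmf measurable_fst]
    have e2 : ∫⁻ x, (f x : ℝ≥0∞) ∂m₂ = ∫⁻ q : X × X, (f q.2 : ℝ≥0∞) ∂γ := by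
      rw [← hγ2, lintegral_map hmf measurable_snd]
    have key : ∀ (a b : X), (f a : ℝ≥0∞) ≤ (f b : ℝ≥0∞) + K * edist a b := by
      intro a b
      calc (f a : ℝ≥0∞) ≤ (f b : ℝ≥0∞) + edist (f a) (f b) := nnreal_le_add_edist _ _
        _ ≤ (f b : ℝ≥0∞) + K * edist a b := by gcongr; exact hf a b
    have hmd : Measurable fun q : X × X => edist q.1 q.2 :=
      (continuous_fst.edist continuous_snd).measurable
    constructor
    · rw [e1, e2]
      calc ∫⁻ q : X × X, (f q.1 : ℝ≥0∞) ∂γ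
          ≤ ∫⁻ q : X × X, ((f q.2 : ℝ≥0∞) + K * edist q.1 q.2) ∂γ :=
            lintegral_mono fun q => key q.1 q.2
        _ = ∫⁻ q : X × X, (f q.2 : ℝ≥0∞) ∂γ + K * ∫⁻ q : X × X, edist q.1 q.2 ∂γ := by
            rw [lintegral_add_right _ (hmd.const_mul _), lintegral_const_mul _ hmd]
        _ ≤ ∫⁻ q : X × X, (f q.2 : ℝ≥0∞) ∂γ + K * ε := by gcongr
    · rw [e1, e2]
      calc ∫⁻ q : X × X, (f q.2 : ℝ≥0∞) ∂γ
          ≤ ∫⁻ q : X × X, ((f q.1 : ℝ≥0∞) + K * edist q.2 q.1) ∂γ :=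
            lintegral_mono fun q => key q.2 q.1
        _ = ∫⁻ q : X × X, (f q.1 : ℝ≥0∞) ∂γ + K * ∫⁻ q : X × X, edist q.2 q.1 ∂γ := by
            rw [lintegral_add_right _ ((continuous_snd.edist continuous_fst).measurable.const_mul _),
              lintegral_const_mul _ (continuous_snd.edist continuous_fst).measurable]
        _ ≤ ∫⁻ q : X × X, (f q.1 : ℝ≥0∞) ∂γ + K * ε := by
            gcongr
            calc ∫⁻ q : X × X, edist q.2 q.1 ∂γ = ∫⁻ q : X × X, edist q.1 q.2 ∂γ := by
                  apply lintegral_congr; intro q; rw [edist_comm]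
              _ ≤ (ε : ℝ≥0∞) := hdist
  -- conclude by letting ε → 0
  have fin : ∀ (m : Measure X), IsProbabilityMeasure m → ∫⁻ x, (f x : ℝ≥0∞) ∂m < ⊤ := by
    intro m hm
    calc ∫⁻ x, (f x : ℝ≥0∞) ∂m ≤ ∫⁻ _, (1:ℝ≥0∞) ∂m :=
          lintegral_mono fun x => by
            simpa using ENNReal.coe_le_coe.2 (hb x)
      _ = 1 := by simp
      _ < ⊤ := by simp
  have side : ∀ (a b : ℝ≥0∞), b ≠ ⊤ → (∀ ε : ℝ≥0, 0 < ε → a ≤ b + K * ε) → a ≤ b := by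
    intro a b hbt hab
    refine ENNReal.le_of_forall_pos_le_add fun ε hε _ => ?_
    have hK1 : (0:ℝ≥0) < ε / (K + 1) := by positivity
    refine (hab _ hK1).trans ?_
    gcongr
    calc (K : ℝ≥0∞) * (ε / (K + 1) : ℝ≥0)
        = ((K * (ε / (K + 1)) : ℝ≥0) : ℝ≥0∞) := by push_cast; ring
      _ ≤ (ε : ℝ≥0∞) := by
          norm_cast
          rw [mul_comm, div_mul_eq_mul_div, div_le_iff₀ (by positivity)]
          exact mul_le_mul_right (le_add_right le_rfl) ε
  exact le_antisymm
    (side _ _ (fin m₂ inferInstance).ne fun ε hε => (main ε hε).1)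
    (side _ _ (fin m₁ inferInstance).ne fun ε hε => (main ε hε).2)

end OneD

/-- Probability measures at `p`-Wasserstein distance `0` are equal. -/
lemma wasserstein_zero_eq {X : Type*} [MeasurableSpace X] [MetricSpace X] [BorelSpace X]
    [SecondCountableTopology X] {p : ℝ} (hp : 1 ≤ p)
    {m₁ m₂ : Measure X} [IsProbabilityMeasure m₁] [IsProbabilityMeasure m₂]
    (h : wassersteinDist p m₁ m₂ = 0) : m₁ = m₂ := by
  have closed_eq : ∀ F : Set X, IsClosed F → m₁ F = m₂ F := by
    intro F hF
    rcases F.eq_empty_or_nonempty with rfl | hFne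
    · simp
    -- Lipschitz approximations of the indicator of F
    set f : ℕ → X → ℝ≥0 := fun n x => Real.toNNReal (1 - n * Metric.infDist x F) with hfdef
    have hlip : ∀ n : ℕ, LipschitzWith (1 * ((n : ℝ≥0) * 1)) (f n) := by
      intro n
      have hg : LipschitzWith (n : ℝ≥0) (fun t : ℝ => 1 - (n : ℝ) * t) := by
        apply LipschitzWith.of_dist_le_mul
        intro a b
        rw [Real.dist_eq, Real.dist_eq]
        have : (1 - n*a) - (1 - n*b) = (n:ℝ) * (b - a) := by ring
        rw [this, abs_mul, abs_sub_comm]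
        simp [Nat.abs_cast]
      exact lipschitzWith_posPart.comp (hg.comp (lipschitz_infDist_pt F))
    have hble : ∀ n x, f n x ≤ 1 := by
      intro n x
      have : (1 - (n:ℝ) * Metric.infDist x F) ≤ 1 := by
        have := Metric.infDist_nonneg (x := x) (s := F)
        nlinarith
      calc f n x ≤ Real.toNNReal 1 := Real.toNNReal_mono this
        _ = 1 := by simp
    have hmeas : ∀ n, Measurable fun x => (f n x : ℝ≥0∞) :=
      fun n => ((hlip n).continuous.measurable).coe_nnreal_ennreal
    have hptwise : ∀ x, Filter.Tendsto (fun n => (f n x : ℝ≥0∞)) atTop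
        (𝓝 (F.indicator (fun _ => (1:ℝ≥0∞)) x)) := by
      intro x
      by_cases hx : x ∈ F
      · have : ∀ n : ℕ, (f n x : ℝ≥0∞) = 1 := by
          intro n
          simp [hfdef, Metric.infDist_zero_of_mem hx]
        rw [Set.indicator_of_mem hx]
        simp only [this]
        exact tendsto_const_nhds
      · have hd : 0 < Metric.infDist x F := (hF.notMem_iff_infDist_pos hFne).1 hx
        rw [Set.indicator_of_notMem hx]
        apply tendsto_atTop_of_eventually_const (i₀ := ⌈(Metric.infDist x F)⁻¹⌉₊)
        intro n hn
        have h1 : (Metric.infDist x F)⁻¹ ≤ (n : ℝ) := le_trans (Nat.le_ceil _) (by exact_mod_cast hn)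
        have h2 : (1:ℝ) ≤ n * Metric.infDist x F := by
          rw [← inv_mul_cancel₀ hd.ne']
          exact mul_le_mul_of_nonneg_right h1 hd.le
        have : (1 - (n:ℝ) * Metric.infDist x F) ≤ 0 := by linarith
        simp [hfdef, Real.toNNReal_of_nonpos this]
    have hdom : ∀ (m : Measure X), IsProbabilityMeasure m →
        Filter.Tendsto (fun n => ∫⁻ x, (f n x : ℝ≥0∞) ∂m) atTop
          (𝓝 (∫⁻ x, F.indicator (fun _ => (1:ℝ≥0∞)) x ∂m)) := by
      intro m hm
      apply tendsto_lintegral_of_dominated_convergence (fun _ => (1:ℝ≥0∞)) hmeas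
      · intro n
        filter_upwards with x
        exact_mod_cast ENNReal.coe_le_coe.2 (hble n x)
      · simp
      · filter_upwards with x using hptwise x
    have h1 := hdom m₁ inferInstance
    have h2 := hdom m₂ inferInstance
    have heqn : ∀ n, ∫⁻ x, (f n x : ℝ≥0∞) ∂m₁ = ∫⁻ x, (f n x : ℝ≥0∞) ∂m₂ :=
      fun n => lintegral_lipschitz_eq_of_wasserstein_zero hp h (hlip n) (hble n)
    simp only [heqn] at h1
    have := tendsto_nhds_unique h1 h2
    rwa [show (fun (_ : X) => (1:ℝ≥0∞)) = 1 from rfl, lintegral_indicator_one hF.measurableSet,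
      lintegral_indicator_one hF.measurableSet] at this
  -- conclude
  apply MeasureTheory.ext_of_generate_finite _ ?_ isPiSystem_isClosed
  · exact fun F hF => closed_eq F hF
  · exact closed_eq univ isClosed_univ
  · rw [BorelSpace.measurable_eq (α := X), borel_eq_generateFrom_isClosed]

variable {V : Type*} [NormedAddCommGroup V] [InnerProductSpace ℝ V] [FiniteDimensional ℝ V]
  [MeasurableSpace V] [BorelSpace V]

/-- The characteristic-function-like integral of a measure. -/
noncomputable def charFn (m : Measure V) (ξ : V) : ℂ := ∫ x, (𝐞 ⟪ξ, x⟫ : ℂ) ∂m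

lemma norm_circle (z : Circle) : ‖(z : ℂ)‖ = 1 := by
  rw [Circle.norm_coe]

omit [FiniteDimensional ℝ V] [MeasurableSpace V] [BorelSpace V] in
lemma charFn_integrand_continuous : Continuous (fun q : V × V => (𝐞 ⟪q.1, q.2⟫ : ℂ)) :=
  continuous_subtype_val.comp (Real.continuous_fourierChar.comp continuous_inner)

omit [FiniteDimensional ℝ V] [MeasurableSpace V] [BorelSpace V] in
lemma charFn_cont_right (ξ : V) : Continuous fun x : V => (𝐞 ⟪ξ, x⟫ : ℂ) := by
  have := charFn_integrand_continuous.comp ((continuous_const (y := ξ)).prodMk continuous_id)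
  exact this

omit [FiniteDimensional ℝ V] [MeasurableSpace V] [BorelSpace V] in
lemma charFn_cont_left (x : V) : Continuous fun ξ : V => (𝐞 ⟪ξ, x⟫ : ℂ) := by
  have := charFn_integrand_continuous.comp (continuous_id.prodMk (continuous_const (y := x)))
  exact this

omit [FiniteDimensional ℝ V] in
lemma charFn_continuous (m : Measure V) [IsProbabilityMeasure m] : Continuous (charFn m) := by
  apply continuous_of_dominated (bound := fun _ => (1:ℝ))
  · exact fun ξ => (charFn_cont_right ξ).aestronglyMeasurable
  · intro ξ
    filter_upwards with x
    rw [norm_circle]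
  · exact integrable_const 1
  · filter_upwards with x using charFn_cont_left x

/-- Schwartz functions integrate equally against measures with equal characteristic functions. -/
lemma integral_schwartz_eq_of_charFn_eq {μ ν : Measure V}
    [IsProbabilityMeasure μ] [IsProbabilityMeasure ν]
    (h : charFn μ = charFn ν) (f : SchwartzMap V ℂ) :
    ∫ x, f x ∂μ = ∫ x, f x ∂ν := by
  set g : SchwartzMap V ℂ := SchwartzMap.fourierTransformCLM ℂ f with hg
  have hinv : ∀ x, f x = 𝓕⁻ (⇑g) x := by
    intro x
    have h2 : 𝓕⁻ (𝓕 ⇑f) = ⇑f :=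
      Continuous.fourierInv_fourier_eq f.continuous f.integrable g.integrable
    rw [hg]
    simp only [SchwartzMap.fourierTransformCLM_apply]
    exact (congrFun h2 x).symm
  have key : ∀ (m : Measure V), IsProbabilityMeasure m →
      ∫ x, f x ∂m = ∫ ξ, (charFn m ξ) * g ξ := by
    intro m hm
    have hint : Integrable (Function.uncurry fun (x ξ : V) => (𝐞 ⟪ξ, x⟫ : ℂ) * g ξ)
        (m.prod volume) := by
      have hcont : Continuous (Function.uncurry fun (x ξ : V) => (𝐞 ⟪ξ, x⟫ : ℂ) * g ξ) := by
        have h1 : Continuous fun q : V × V => (𝐞 ⟪q.2, q.1⟫ : ℂ) := by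
          have := charFn_integrand_continuous.comp
            ((continuous_snd (X := V) (Y := V)).prodMk continuous_fst)
          exact this
        have h2 : Continuous fun q : V × V => g q.2 := g.continuous.comp continuous_snd
        exact h1.mul h2
      rw [MeasureTheory.integrable_prod_iff hcont.aestronglyMeasurable]
      constructor
      · filter_upwards with x
        exact g.integrable.bdd_mul (charFn_cont_left x).aestronglyMeasurable
          (c := 1) (Filter.Eventually.of_forall fun ξ => le_of_eq (norm_circle _))
      · have : (fun x : V => ∫ ξ : V, ‖(𝐞 ⟪ξ, x⟫ : ℂ) * g ξ‖) =
            fun _ : V => ∫ ξ : V, ‖g ξ‖ := by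
          funext x
          congr 1
          funext ξ
          rw [norm_mul, norm_circle, one_mul]
        simp only [Function.uncurry]
        rw [this]
        exact integrable_const _
    calc ∫ x, f x ∂m
        = ∫ x, 𝓕⁻ (⇑g) x ∂m := integral_congr_ae (Filter.Eventually.of_forall hinv)
      _ = ∫ x, (∫ ξ : V, (𝐞 ⟪ξ, x⟫ : ℂ) * g ξ) ∂m := by
          apply integral_congr_ae
          filter_upwards with x
          rw [Real.fourierInv_eq]
          simp_rw [Circle.smul_def, smul_eq_mul]
      _ = ∫ ξ : V, (∫ x, (𝐞 ⟪ξ, x⟫ : ℂ) * g ξ ∂m) := integral_integral_swap hint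
      _ = ∫ ξ, (charFn m ξ) * g ξ := by
          apply integral_congr_ae
          filter_upwards with ξ
          rw [charFn]
          simp_rw [← smul_eq_mul]
          rw [integral_smul_const]
  rw [key μ inferInstance, key ν inferInstance, h]

/-- A smooth compactly supported function is a Schwartz function. -/
noncomputable def toSchwartz (f : V → ℂ) (hf : ContDiff ℝ ∞ f) (hsupp : HasCompactSupport f) :
    SchwartzMap V ℂ where
  toFun := f
  smooth' := hf
  decay' := by
    intro k n
    set g : V → ℝ := fun x => ‖x‖ ^ k * ‖iteratedFDeriv ℝ n f x‖ with hgdef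
    have hgc : Continuous g := by
      apply Continuous.mul
      · exact (continuous_norm.pow k)
      · exact (hf.continuous_iteratedFDeriv (by exact_mod_cast le_top)).norm
    have hgs : HasCompactSupport g := by
      apply HasCompactSupport.mul_left
      exact (hsupp.iteratedFDeriv n).norm
    obtain ⟨C, hC⟩ := hgs.exists_bound_of_continuous hgc
    exact ⟨C, fun x => (le_abs_self _).trans ((Real.norm_eq_abs _ ▸ hC x))⟩

/-- Measures with equal characteristic functions are equal. -/
lemma measure_eq_of_charFn_eq {μ ν : Measure V}
    [IsProbabilityMeasure μ] [IsProbabilityMeasure ν]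
    (h : charFn μ = charFn ν) : μ = ν := by
  -- step 1: smooth compactly supported real functions integrate equally
  have step1 : ∀ f : V → ℝ, ContDiff ℝ ∞ f → HasCompactSupport f →
      ∫ x, f x ∂μ = ∫ x, f x ∂ν := by
    intro f hf hsupp
    have hfc : ContDiff ℝ ∞ (fun x => (f x : ℂ)) :=
      Complex.ofRealCLM.contDiff.comp hf
    have hfcs : HasCompactSupport (fun x => (f x : ℂ)) := by
      have : (fun x => (f x : ℂ)) = (fun r : ℝ => (r : ℂ)) ∘ f := rfl
      rw [this]
      exact hsupp.comp_left (by simp)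
    have := integral_schwartz_eq_of_charFn_eq h (toSchwartz _ hfc hfcs)
    have h2 : ∫ x, ((f x : ℂ)) ∂μ = ∫ x, ((f x : ℂ)) ∂ν := this
    have hfiμ : Integrable f μ := hf.continuous.integrable_of_hasCompactSupport hsupp
    have hfiν : Integrable f ν := hf.continuous.integrable_of_hasCompactSupport hsupp
    have e : ((∫ x, f x ∂μ : ℝ) : ℂ) = ((∫ x, f x ∂ν : ℝ) : ℂ) := by
      rw [← Complex.ofRealCLM_apply, ← Complex.ofRealCLM_apply,
        ← ContinuousLinearMap.integral_comp_comm _ hfiμ,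
        ← ContinuousLinearMap.integral_comp_comm _ hfiν]
      exact h2
    exact_mod_cast e
  -- step 2: equality on compact sets
  have step2 : ∀ K : Set V, IsCompact K → μ K = ν K := by
    intro K hK
    have hbd : ∀ δ : ℝ, 0 < δ → (μ K).toReal ≤ (ν (cthickening δ K)).toReal ∧
        (ν K).toReal ≤ (μ (cthickening δ K)).toReal := by
      intro δ hδ
      -- smooth Urysohn between K and the thickening
      obtain ⟨χ, hχ0, hχ1, hχ01⟩ :=
        exists_contMDiffMap_zero_one_of_isClosed (𝓘(ℝ, V)) (n := ⊤)
          (isOpen_thickening (δ := δ) (E := K)).isClosed_compl hK.isClosed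
          (by
            rw [disjoint_compl_left_iff_subset]
            exact self_subset_thickening hδ K)
      have hχc : Continuous χ := χ.contMDiff.continuous
      have hχs : HasCompactSupport (χ : V → ℝ) := by
        apply HasCompactSupport.intro (hK.cthickening)
        intro x hx
        apply hχ0
        simp only [mem_compl_iff]
        intro hmem
        exact hx (thickening_subset_cthickening δ K hmem)
      have hint : ∀ (m : Measure V), IsProbabilityMeasure m → Integrable χ m := by
        intro m hm
        exact hχc.integrable_of_hasCompactSupport hχs
      have hchina : ∫ x, (χ : V → ℝ) x ∂μ = ∫ x, (χ : V → ℝ) x ∂ν := by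
        apply step1
        · exact (contMDiff_iff_contDiff.1 χ.contMDiff)
        · exact hχs
      have lower : ∀ (m : Measure V) (hm : IsProbabilityMeasure m),
          (m K).toReal ≤ ∫ x, (χ : V → ℝ) x ∂m := by
        intro m hm
        have : ∫ x, K.indicator (fun _ => (1:ℝ)) x ∂m ≤ ∫ x, (χ : V → ℝ) x ∂m := by
          apply integral_mono ((integrable_const (1:ℝ)).indicator hK.measurableSet) (hint m hm)
          intro x
          by_cases hx : x ∈ K
          · rw [indicator_of_mem hx]
            exact le_of_eq (hχ1 hx).symm
          · rw [indicator_of_notMem hx]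
            exact (hχ01 x).1
        rwa [integral_indicator_const _ hK.measurableSet, smul_eq_mul, mul_one] at this
      have upper : ∀ (m : Measure V) (hm : IsProbabilityMeasure m),
          ∫ x, (χ : V → ℝ) x ∂m ≤ (m (cthickening δ K)).toReal := by
        intro m hm
        have : ∫ x, (χ : V → ℝ) x ∂m
            ≤ ∫ x, (cthickening δ K).indicator (fun _ => (1:ℝ)) x ∂m := by
          apply integral_mono (hint m hm)
            ((integrable_const (1:ℝ)).indicator isClosed_cthickening.measurableSet)
          intro x
          by_cases hx : x ∈ cthickening δ K
          · rw [indicator_of_mem hx]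
            exact (hχ01 x).2
          · rw [indicator_of_notMem hx]
            have hx' : x ∈ (thickening δ K)ᶜ :=
              fun hmem => hx (thickening_subset_cthickening δ K hmem)
            exact le_of_eq (hχ0 hx')
        rwa [integral_indicator_const _ isClosed_cthickening.measurableSet, smul_eq_mul,
          mul_one] at this
      constructor
      · calc (μ K).toReal ≤ ∫ x, (χ : V → ℝ) x ∂μ := lower μ inferInstance
          _ = ∫ x, (χ : V → ℝ) x ∂ν := hchina
          _ ≤ (ν (cthickening δ K)).toReal := upper ν inferInstance
      · calc (ν K).toReal ≤ ∫ x, (χ : V → ℝ) x ∂ν := lower ν inferInstance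
          _ = ∫ x, (χ : V → ℝ) x ∂μ := hchina.symm
          _ ≤ (μ (cthickening δ K)).toReal := upper μ inferInstance
    -- pass to the limit δ → 0
    have hlim : ∀ (m : Measure V), IsProbabilityMeasure m →
        Tendsto (fun δ => (m (cthickening δ K)).toReal) (𝓝[>] (0:ℝ))
          (𝓝 ((m K).toReal)) := by
      intro m hm
      have ht : Tendsto (fun δ => m (cthickening δ K)) (𝓝[>] (0:ℝ)) (𝓝 (m K)) :=
        (tendsto_measure_cthickening_of_isClosed
          ⟨1, one_pos, (measure_ne_top m _)⟩ hK.isClosed).mono_left nhdsWithin_le_nhds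
      exact (ENNReal.tendsto_toReal (measure_ne_top m K)).comp ht
    have le1 : (μ K).toReal ≤ (ν K).toReal := by
      apply ge_of_tendsto (hlim ν inferInstance)
      filter_upwards [self_mem_nhdsWithin] with δ hδ
      exact (hbd δ hδ).1
    have le2 : (ν K).toReal ≤ (μ K).toReal := by
      apply ge_of_tendsto (hlim μ inferInstance)
      filter_upwards [self_mem_nhdsWithin] with δ hδ
      exact (hbd δ hδ).2
    have := le_antisymm le1 le2
    exact (ENNReal.toReal_eq_toReal_iff' (measure_ne_top μ K) (measure_ne_top ν K)).1 this
  -- step 3: equality on closed sets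
  have step3 : ∀ F : Set V, IsClosed F → μ F = ν F := by
    intro F hF
    have hmono : Monotone (fun n : ℕ => F ∩ closedBall 0 n) := by
      intro a b hab
      exact inter_subset_inter_right F (closedBall_subset_closedBall (by exact_mod_cast hab))
    have hunion : ⋃ n : ℕ, (F ∩ closedBall 0 n) = F := by
      apply Subset.antisymm
      · exact iUnion_subset fun n => inter_subset_left
      · intro x hx
        obtain ⟨n, hn⟩ := exists_nat_ge ‖x‖
        exact mem_iUnion.2 ⟨n, hx, by simpa [mem_closedBall, dist_zero_right] using hn⟩
    have hcpt : ∀ n : ℕ, IsCompact (F ∩ closedBall 0 n) :=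
      fun n => (isCompact_closedBall _ _).inter_left hF
    have t1 : Tendsto (fun n : ℕ => μ (F ∩ closedBall 0 n)) atTop (𝓝 (μ F)) := by
      have := tendsto_measure_iUnion_atTop (μ := μ) hmono
      rw [hunion] at this
      exact this
    have t2 : Tendsto (fun n : ℕ => ν (F ∩ closedBall 0 n)) atTop (𝓝 (ν F)) := by
      have := tendsto_measure_iUnion_atTop (μ := ν) hmono
      rw [hunion] at this
      exact this
    have heq : (fun n : ℕ => μ (F ∩ closedBall 0 n)) = fun n : ℕ => ν (F ∩ closedBall 0 n) :=
      funext fun n => step2 _ (hcpt n)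
    rw [heq] at t1
    exact tendsto_nhds_unique t1 t2
  apply MeasureTheory.ext_of_generate_finite _ ?_ isPiSystem_isClosed
  · exact fun F hF => step3 F hF
  · exact step3 univ isClosed_univ
  · rw [BorelSpace.measurable_eq (α := V), borel_eq_generateFrom_isClosed]

end Helpers

section Main

variable {d : ℕ}

local notation "E" => EuclideanSpace ℝ (Fin d)

lemma ball_pos (σ : Measure E) [IsProbabilityMeasure σ]
    (hsupp : σ (Metric.sphere (0 : E) 1) = 1)
    (hinv : ∀ e : E ≃ₗᵢ[ℝ] E, σ.map e = σ)
    {θ₀ : E} (hθ₀ : θ₀ ∈ Metric.sphere (0 : E) 1) {r : ℝ} (hr : 0 < r) :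
    0 < σ (Metric.ball θ₀ r) := by
  by_contra hcon
  have h0 : σ (Metric.ball θ₀ r) = 0 := le_antisymm (le_of_not_gt hcon) zero_le
  have heq : ∀ θ ∈ Metric.sphere (0 : E) 1, σ (Metric.ball θ r) = 0 := by
    intro θ hθ
    set e : E ≃ₗᵢ[ℝ] E := Submodule.reflection (ℝ ∙ (θ₀ - θ))ᗮ with he_def
    have he : e θ₀ = θ := by
      apply Submodule.reflection_sub
      rw [mem_sphere_zero_iff_norm.1 hθ₀, mem_sphere_zero_iff_norm.1 hθ]
    have h1 : σ (Metric.ball θ r) = σ (e ⁻¹' Metric.ball θ r) := by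
      conv_lhs => rw [← hinv e]
      rw [Measure.map_apply e.continuous.measurable measurableSet_ball]
    have h2 : e ⁻¹' Metric.ball θ r = Metric.ball θ₀ r := by
      ext x
      simp only [mem_preimage, Metric.mem_ball]
      rw [← he, e.dist_map]
    rw [h1, h2, h0]
  obtain ⟨t, hts, htfin, hcover⟩ :=
    (isCompact_sphere (0:E) 1).elim_finite_subcover_image
      (fun θ (_ : θ ∈ Metric.sphere (0:E) 1) => Metric.isOpen_ball (x := θ) (ε := r))
      (fun x hx => mem_iUnion₂.2 ⟨x, hx, Metric.mem_ball_self hr⟩)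
  have hz : σ (Metric.sphere (0:E) 1) = 0 := by
    apply measure_mono_null hcover
    exact (measure_biUnion_null_iff htfin.countable).2 fun θ hθ => heq θ (hts hθ)
  rw [hsupp] at hz
  exact one_ne_zero hz

lemma charFn_ray {μ ν : Measure E} [IsProbabilityMeasure μ] [IsProbabilityMeasure ν]
    {θ : E} (hθ : μ.map (fun x => (inner ℝ θ x : ℝ)) = ν.map (fun x => (inner ℝ θ x : ℝ)))
    (t : ℝ) : charFn μ (t • θ) = charFn ν (t • θ) := by
  have hmeas : Measurable fun x : E => (inner ℝ θ x : ℝ) :=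
    (continuous_const.inner continuous_id).measurable
  have hcont : Continuous fun s : ℝ => (𝐞 (t * s) : ℂ) :=
    continuous_subtype_val.comp (Real.continuous_fourierChar.comp
      (continuous_const.mul continuous_id))
  have key : ∀ m : Measure E, charFn m (t • θ)
      = ∫ s : ℝ, (𝐞 (t * s) : ℂ) ∂(m.map (fun x => (inner ℝ θ x : ℝ))) := by
    intro m
    rw [charFn, integral_map hmeas.aemeasurable hcont.aestronglyMeasurable]
    congr 1
    funext x
    rw [real_inner_smul_left]
  rw [key μ, key ν, hθ]

/-- The sliced `p`-Wasserstein distance separates probability measures: if the `p`-Wasserstein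
distance between the linear slices of `μ` and `ν` vanishes for almost every direction with
respect to the uniform measure on the unit sphere (characterized as a Borel probability
measure concentrated on the unit sphere and invariant under every linear isometry of `ℝ^d`),
then `μ = ν`. -/
theorem sliced_wasserstein_separates
    (p : ℝ) (hp : 1 ≤ p) (d : ℕ)
    (σ : Measure (EuclideanSpace ℝ (Fin d))) [IsProbabilityMeasure σ]
    (hsupp : σ (Metric.sphere (0 : EuclideanSpace ℝ (Fin d)) 1) = 1)
    (hinv : ∀ e : EuclideanSpace ℝ (Fin d) ≃ₗᵢ[ℝ] EuclideanSpace ℝ (Fin d),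
      σ.map e = σ)
    (μ ν : Measure (EuclideanSpace ℝ (Fin d)))
    [IsProbabilityMeasure μ] [IsProbabilityMeasure ν]
    (hμ : ∫⁻ x, ENNReal.ofReal (‖x‖ ^ p) ∂μ < ∞)
    (hν : ∫⁻ x, ENNReal.ofReal (‖x‖ ^ p) ∂ν < ∞)
    (h0 : ∀ᵐ θ ∂σ,
      wassersteinDist p
        (μ.map fun x => (inner ℝ θ x : ℝ)) (ν.map fun x => (inner ℝ θ x : ℝ)) = 0) :
    μ = ν := by
  have hae : ∀ᵐ θ ∂σ, μ.map (fun x => (inner ℝ θ x : ℝ)) = ν.map (fun x => (inner ℝ θ x : ℝ)) := by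
    filter_upwards [h0] with θ hθ
    have hmeas : Measurable fun x : EuclideanSpace ℝ (Fin d) => (inner ℝ θ x : ℝ) :=
      (continuous_const.inner continuous_id).measurable
    haveI : IsProbabilityMeasure (μ.map fun x => (inner ℝ θ x : ℝ)) :=
      Measure.isProbabilityMeasure_map hmeas.aemeasurable
    haveI : IsProbabilityMeasure (ν.map fun x => (inner ℝ θ x : ℝ)) :=
      Measure.isProbabilityMeasure_map hmeas.aemeasurable
    exact wasserstein_zero_eq hp hθ
  set S : Set (EuclideanSpace ℝ (Fin d)) :=
    {θ | μ.map (fun x => (inner ℝ θ x : ℝ)) = ν.map (fun x => (inner ℝ θ x : ℝ))} with hS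
  have hSc : σ Sᶜ = 0 := by
    have := ae_iff.1 hae
    simpa [hS, Set.compl_setOf] using this
  have hchar : charFn μ = charFn ν := by
    funext ξ
    rcases eq_or_ne ξ 0 with rfl | hξ
    · have hz : ∀ x : EuclideanSpace ℝ (Fin d), (𝐞 ⟪(0:EuclideanSpace ℝ (Fin d)), x⟫ : ℂ) = 1 := by
        intro x
        rw [inner_zero_left]
        simp
      rw [charFn, charFn]
      simp only [hz]
      rw [integral_const, integral_const]
      simp
    · set θstar : EuclideanSpace ℝ (Fin d) := ‖ξ‖⁻¹ • ξ with hθstar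
      have hnorm : ‖ξ‖ ≠ 0 := norm_ne_zero_iff.2 hξ
      have hθs : θstar ∈ Metric.sphere (0 : EuclideanSpace ℝ (Fin d)) 1 := by
        rw [mem_sphere_zero_iff_norm, hθstar, norm_smul, norm_inv, norm_norm,
          inv_mul_cancel₀ hnorm]
      set T : Set (EuclideanSpace ℝ (Fin d)) :=
        {θ | charFn μ (‖ξ‖ • θ) = charFn ν (‖ξ‖ • θ)} with hT
      have hTclosed : IsClosed T := by
        apply isClosed_eq
        · exact (charFn_continuous μ).comp (continuous_const_smul _)
        · exact (charFn_continuous ν).comp (continuous_const_smul _)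
      have hsub : S ⊆ T := fun θ hθ => charFn_ray hθ ‖ξ‖
      have hcl : θstar ∈ closure S := by
        rw [Metric.mem_closure_iff]
        intro ε hε
        have hpos := ball_pos σ hsupp hinv hθs hε
        by_contra hempty
        push_neg at hempty
        have hball : Metric.ball θstar ε ⊆ Sᶜ := by
          intro y hy hyS
          rw [Metric.mem_ball, dist_comm] at hy
          exact absurd (hempty y hyS) (not_le.2 hy)
        exact absurd (measure_mono_null hball hSc) hpos.ne'
      have hmemT : θstar ∈ T := by
        have : closure S ⊆ T := by
          rw [← hTclosed.closure_eq]
          exact closure_mono hsub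
        exact this hcl
      have : charFn μ (‖ξ‖ • θstar) = charFn ν (‖ξ‖ • θstar) := hmemT
      rwa [hθstar, smul_smul, mul_inv_cancel₀ hnorm, one_smul] at this
  exact measure_eq_of_charFn_eq hchar


end Main
end

section
/- Injectivity of the generalized Radon transform defined by odd-degree homogeneous polynomials: let m be an odd positive integer and for θ = (θ_α)_{|α|=m} (indexed by multi-indices α ∈ ℕ^d with |α| = ∑ᵢ αᵢ = m) let g(x,θ) = ∑_{|α|=m} θ_α x^α, where x^α = ∏ᵢ xᵢ^{αᵢ}. If μ and ν are compactly supported Borel probability measures on ℝ^d such that for every θ with ∑_{|α|=m} θ_α² = 1 the pushforward measures g(·,θ)_#μ and g(·,θ)_#ν coincide, then μ = ν. -/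
open MeasureTheory Finset MvPolynomial BoundedContinuousFunction ENNReal NNReal

section Aux

variable {d m : ℕ}

/-- Integrability of continuous functions w.r.t. compactly supported finite measures. -/
private lemma aux_integrable (μ : Measure (Fin d → ℝ)) [IsFiniteMeasure μ]
    {K : Set (Fin d → ℝ)} (hK : IsCompact K) (hμK : μ Kᶜ = 0)
    {f : (Fin d → ℝ) → ℝ} (hf : Continuous f) : Integrable f μ := by
  obtain ⟨C, hC⟩ := hK.exists_bound_of_continuousOn hf.continuousOn
  refine Integrable.mono' (integrable_const C) hf.aestronglyMeasurable ?_
  refine (ae_iff).2 (measure_mono_null (fun x hx => ?_) hμK)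
  simp only [Set.mem_setOf_eq, not_le] at hx
  intro hxK
  exact absurd (hC x hxK) (not_le.2 hx)

private lemma aux_ae_mem (μ : Measure (Fin d → ℝ)) {K : Set (Fin d → ℝ)} (hμK : μ Kᶜ = 0) :
    ∀ᵐ x ∂μ, x ∈ K := by
  rw [ae_iff]
  exact measure_mono_null (fun x hx => hx) hμK

private lemma aux_cont_g (θ : (Fin d → ℕ) → ℝ) :
    Continuous fun x : Fin d → ℝ =>
      ∑ α ∈ Finset.Nat.antidiagonalTuple d m, θ α * ∏ i, x i ^ α i := by
  refine continuous_finset_sum _ fun α _ => (continuous_const.mul ?_)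
  exact continuous_finset_prod _ fun i _ => (continuous_apply i).pow _

private lemma aux_cont_mon (α : Fin d → ℕ) :
    Continuous fun x : Fin d → ℝ => ∏ i, x i ^ α i :=
  continuous_finset_prod _ fun i _ => (continuous_apply i).pow _

/-- Scaling: pushforward equality extends from unit θ to θ with nonzero norm. -/
private lemma aux_scale (μ ν : Measure (Fin d → ℝ))
    (h : ∀ θ : (Fin d → ℕ) → ℝ,
      ∑ α ∈ Finset.Nat.antidiagonalTuple d m, θ α ^ 2 = 1 →
      μ.map (fun x => ∑ α ∈ Finset.Nat.antidiagonalTuple d m, θ α * ∏ i, x i ^ α i)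
        = ν.map (fun x => ∑ α ∈ Finset.Nat.antidiagonalTuple d m, θ α * ∏ i, x i ^ α i))
    (θ : (Fin d → ℕ) → ℝ)
    (hθ : ∑ α ∈ Finset.Nat.antidiagonalTuple d m, θ α ^ 2 ≠ 0) :
    μ.map (fun x => ∑ α ∈ Finset.Nat.antidiagonalTuple d m, θ α * ∏ i, x i ^ α i)
      = ν.map (fun x => ∑ α ∈ Finset.Nat.antidiagonalTuple d m, θ α * ∏ i, x i ^ α i) := by
  set S := ∑ α ∈ Finset.Nat.antidiagonalTuple d m, θ α ^ 2 with hS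
  have hSpos : 0 < S := lt_of_le_of_ne (Finset.sum_nonneg fun α _ => sq_nonneg _) (Ne.symm hθ)
  set s := Real.sqrt S with hs
  have hspos : 0 < s := Real.sqrt_pos.2 hSpos
  set θ' : (Fin d → ℕ) → ℝ := fun α => θ α / s with hθ'
  have hunit : ∑ α ∈ Finset.Nat.antidiagonalTuple d m, θ' α ^ 2 = 1 := by
    simp only [hθ', div_pow, ← Finset.sum_div]
    rw [Real.sq_sqrt hSpos.le, div_self hSpos.ne']
  have key := h θ' hunit
  have hfun : (fun x : Fin d → ℝ =>
      ∑ α ∈ Finset.Nat.antidiagonalTuple d m, θ α * ∏ i, x i ^ α i)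
      = (fun t => s * t) ∘ (fun x =>
        ∑ α ∈ Finset.Nat.antidiagonalTuple d m, θ' α * ∏ i, x i ^ α i) := by
    funext x
    simp only [Function.comp_apply, Finset.mul_sum, hθ']
    refine Finset.sum_congr rfl fun α _ => ?_
    field_simp
  rw [hfun, ← Measure.map_map (measurable_const_mul s) (aux_cont_g θ').measurable,
    ← Measure.map_map (measurable_const_mul s) (aux_cont_g θ').measurable, key]

private lemma aux_piAntidiag_eq (d n : ℕ) :
    Finset.piAntidiag (Finset.univ : Finset (Fin d)) n = Finset.Nat.antidiagonalTuple d n := by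
  ext f
  simp [Finset.mem_piAntidiag, Finset.Nat.mem_antidiagonalTuple]

/-- The multinomial theorem, keyed to `antidiagonalTuple`. -/
private lemma aux_multinomial_id (ξ x : Fin d → ℝ) (m : ℕ) :
    (∑ i, ξ i * x i) ^ m
      = ∑ α ∈ Finset.Nat.antidiagonalTuple d m,
          ((Nat.multinomial Finset.univ α : ℝ) * ∏ i, ξ i ^ α i) * ∏ i, x i ^ α i := by
  rw [Finset.sum_pow_eq_sum_piAntidiag Finset.univ (fun i => ξ i * x i) m, aux_piAntidiag_eq]
  refine Finset.sum_congr rfl fun α _ => ?_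
  rw [mul_assoc]
  congr 1
  rw [← Finset.prod_mul_distrib]
  exact Finset.prod_congr rfl fun i _ => mul_pow _ _ _

/-- Pushforwards under `x ↦ (ξ·x)^m` agree. -/
private lemma aux_pow_map (μ ν : Measure (Fin d → ℝ))
    [IsProbabilityMeasure μ] [IsProbabilityMeasure ν]
    (h : ∀ θ : (Fin d → ℕ) → ℝ,
      ∑ α ∈ Finset.Nat.antidiagonalTuple d m, θ α ^ 2 ≠ 0 →
      μ.map (fun x => ∑ α ∈ Finset.Nat.antidiagonalTuple d m, θ α * ∏ i, x i ^ α i)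
        = ν.map (fun x => ∑ α ∈ Finset.Nat.antidiagonalTuple d m, θ α * ∏ i, x i ^ α i))
    (ξ : Fin d → ℝ) :
    μ.map (fun x => (∑ i, ξ i * x i) ^ m) = ν.map (fun x => (∑ i, ξ i * x i) ^ m) := by
  by_cases hξ : ξ = 0
  · subst hξ
    have : (fun x : Fin d → ℝ => (∑ i, (0 : Fin d → ℝ) i * x i) ^ m) = fun _ => (0:ℝ)^m := by
      funext x; simp
    rw [this, Measure.map_const, Measure.map_const, measure_univ, measure_univ]
  · set θ : (Fin d → ℕ) → ℝ :=
      fun α => (Nat.multinomial Finset.univ α : ℝ) * ∏ i, ξ i ^ α i with hθdef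
    have hfun : (fun x : Fin d → ℝ => (∑ i, ξ i * x i) ^ m)
        = fun x => ∑ α ∈ Finset.Nat.antidiagonalTuple d m, θ α * ∏ i, x i ^ α i := by
      funext x; rw [aux_multinomial_id]
    obtain ⟨j, hj⟩ : ∃ j, ξ j ≠ 0 := Function.ne_iff.1 hξ
    set β : Fin d → ℕ := fun i => if i = j then m else 0 with hβ
    have hβmem : β ∈ Finset.Nat.antidiagonalTuple d m := by
      rw [Finset.Nat.mem_antidiagonalTuple]
      simp [hβ]
    have hθβ : θ β ≠ 0 := by
      have h1 : (Nat.multinomial Finset.univ β : ℝ) ≠ 0 :=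
        Nat.cast_ne_zero.2 (Nat.multinomial_pos _ _).ne'
      have h2 : (∏ i, ξ i ^ β i) ≠ 0 := by
        refine Finset.prod_ne_zero_iff.2 fun i _ => ?_
        by_cases hij : i = j <;> simp [hβ, hij, pow_ne_zero, hj]
      exact mul_ne_zero h1 h2
    have hsum : ∑ α ∈ Finset.Nat.antidiagonalTuple d m, θ α ^ 2 ≠ 0 := by
      have : 0 < ∑ α ∈ Finset.Nat.antidiagonalTuple d m, θ α ^ 2 := by
        refine Finset.sum_pos' (fun α _ => sq_nonneg _) ⟨β, hβmem, ?_⟩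
        positivity
      exact this.ne'
    rw [hfun]
    exact h θ hsum

private lemma aux_pow_embedding (hm : Odd m) : MeasurableEmbedding (fun t : ℝ => t ^ m) :=
  (continuous_pow m).measurableEmbedding hm.strictMono_pow.injective

private lemma aux_map_injective {f : ℝ → ℝ} (hf : MeasurableEmbedding f)
    (σ τ : Measure ℝ) (hst : σ.map f = τ.map f) : σ = τ := by
  ext s hs
  have h1 : σ.map f (f '' s) = σ (f ⁻¹' (f '' s)) := hf.map_apply σ _
  have h2 : τ.map f (f '' s) = τ (f ⁻¹' (f '' s)) := hf.map_apply τ _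
  rw [hf.injective.preimage_image] at h1 h2
  rw [← h1, ← h2, hst]

/-- Pushforwards under linear forms agree (odd root trick). -/
private lemma aux_linear_map (μ ν : Measure (Fin d → ℝ)) (hm : Odd m)
    (hpow : ∀ ξ : Fin d → ℝ,
      μ.map (fun x => (∑ i, ξ i * x i) ^ m) = ν.map (fun x => (∑ i, ξ i * x i) ^ m))
    (ξ : Fin d → ℝ) :
    μ.map (fun x => ∑ i, ξ i * x i) = ν.map (fun x => ∑ i, ξ i * x i) := by
  have hL : Measurable fun x : Fin d → ℝ => ∑ i, ξ i * x i :=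
    (continuous_finset_sum _ fun i _ => continuous_const.mul (continuous_apply i)).measurable
  refine aux_map_injective (aux_pow_embedding hm) _ _ ?_
  rw [Measure.map_map (continuous_pow m).measurable hL,
    Measure.map_map (continuous_pow m).measurable hL]
  exact hpow ξ

/-- Moments of linear forms agree. -/
private lemma aux_lin_moment (μ ν : Measure (Fin d → ℝ))
    (hlin : ∀ ξ : Fin d → ℝ,
      μ.map (fun x => ∑ i, ξ i * x i) = ν.map (fun x => ∑ i, ξ i * x i))
    (ξ : Fin d → ℝ) (k : ℕ) :
    ∫ x, (∑ i, ξ i * x i) ^ k ∂μ = ∫ x, (∑ i, ξ i * x i) ^ k ∂ν := by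
  have hL : Measurable fun x : Fin d → ℝ => ∑ i, ξ i * x i :=
    (continuous_finset_sum _ fun i _ => continuous_const.mul (continuous_apply i)).measurable
  have hpk : AEStronglyMeasurable (fun t : ℝ => t ^ k) (μ.map (fun x => ∑ i, ξ i * x i)) :=
    (continuous_pow k).aestronglyMeasurable
  have hpk' : AEStronglyMeasurable (fun t : ℝ => t ^ k) (ν.map (fun x => ∑ i, ξ i * x i)) :=
    (continuous_pow k).aestronglyMeasurable
  calc ∫ x, (∑ i, ξ i * x i) ^ k ∂μ
      = ∫ t, t ^ k ∂(μ.map (fun x => ∑ i, ξ i * x i)) :=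
        (integral_map hL.aemeasurable hpk).symm
    _ = ∫ t, t ^ k ∂(ν.map (fun x => ∑ i, ξ i * x i)) := by rw [hlin ξ]
    _ = ∫ x, (∑ i, ξ i * x i) ^ k ∂ν := integral_map hL.aemeasurable hpk'

/-- polynomial whose evaluation at ξ is the k-th moment of the linear form ξ·x. -/
private noncomputable def momPoly (μ : Measure (Fin d → ℝ)) (k : ℕ) : MvPolynomial (Fin d) ℝ :=
  ∑ α ∈ Finset.Nat.antidiagonalTuple d k,
    monomial (Finsupp.equivFunOnFinite.symm α)
      ((Nat.multinomial Finset.univ α : ℝ) * ∫ x, ∏ i, x i ^ α i ∂μ)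

private lemma aux_eval_momPoly (μ : Measure (Fin d → ℝ)) [IsFiniteMeasure μ]
    {K : Set (Fin d → ℝ)} (hK : IsCompact K) (hμK : μ Kᶜ = 0) (k : ℕ) (ξ : Fin d → ℝ) :
    eval ξ (momPoly μ k) = ∫ x, (∑ i, ξ i * x i) ^ k ∂μ := by
  have hint : ∀ α ∈ Finset.Nat.antidiagonalTuple d k,
      Integrable (fun x : Fin d → ℝ =>
        ((Nat.multinomial Finset.univ α : ℝ) * ∏ i, ξ i ^ α i) * ∏ i, x i ^ α i) μ :=
    fun α _ => (aux_integrable μ hK hμK (aux_cont_mon α)).const_mul _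
  have : ∫ x, (∑ i, ξ i * x i) ^ k ∂μ
      = ∑ α ∈ Finset.Nat.antidiagonalTuple d k,
          ((Nat.multinomial Finset.univ α : ℝ) * ∏ i, ξ i ^ α i) * ∫ x, ∏ i, x i ^ α i ∂μ := by
    calc ∫ x, (∑ i, ξ i * x i) ^ k ∂μ
        = ∫ x, ∑ α ∈ Finset.Nat.antidiagonalTuple d k,
            ((Nat.multinomial Finset.univ α : ℝ) * ∏ i, ξ i ^ α i) * ∏ i, x i ^ α i ∂μ := by
          simp_rw [aux_multinomial_id]
      _ = ∑ α ∈ Finset.Nat.antidiagonalTuple d k,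
            ∫ x, ((Nat.multinomial Finset.univ α : ℝ) * ∏ i, ξ i ^ α i) * ∏ i, x i ^ α i ∂μ :=
          integral_finset_sum _ hint
      _ = _ := by
          refine Finset.sum_congr rfl fun α _ => ?_
          rw [integral_const_mul]
  rw [this, momPoly, map_sum]
  refine Finset.sum_congr rfl fun α _ => ?_
  rw [eval_monomial]
  rw [Finsupp.prod_fintype _ _ (fun i => pow_zero _)]
  simp only [Finsupp.coe_equivFunOnFinite_symm]
  ring

/-- Monomial moments agree. -/
private lemma aux_monomial_moment (μ ν : Measure (Fin d → ℝ))
    [IsFiniteMeasure μ] [IsFiniteMeasure ν]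
    {K : Set (Fin d → ℝ)} (hK : IsCompact K) (hμK : μ Kᶜ = 0) (hνK : ν Kᶜ = 0)
    (hlin : ∀ (ξ : Fin d → ℝ) (k : ℕ),
      ∫ x, (∑ i, ξ i * x i) ^ k ∂μ = ∫ x, (∑ i, ξ i * x i) ^ k ∂ν)
    (β : Fin d → ℕ) :
    ∫ x, ∏ i, x i ^ β i ∂μ = ∫ x, ∏ i, x i ^ β i ∂ν := by
  set k := ∑ i, β i with hk
  have hpoly : momPoly μ k = momPoly ν k := by
    refine MvPolynomial.funext fun ξ => ?_
    rw [aux_eval_momPoly μ hK hμK, aux_eval_momPoly ν hK hνK]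
    exact hlin ξ k
  have hβmem : β ∈ Finset.Nat.antidiagonalTuple d k := by
    rw [Finset.Nat.mem_antidiagonalTuple]
  have hcoeff := congrArg (coeff (Finsupp.equivFunOnFinite.symm β)) hpoly
  have hterm : ∀ (μ' : Measure (Fin d → ℝ)),
      coeff (Finsupp.equivFunOnFinite.symm β) (momPoly μ' k)
        = (Nat.multinomial Finset.univ β : ℝ) * ∫ x, ∏ i, x i ^ β i ∂μ' := by
    intro μ'
    rw [momPoly, MvPolynomial.coeff_sum]
    rw [Finset.sum_eq_single β (fun α _ hne => ?_) (fun hβ => absurd hβmem hβ)]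
    · rw [coeff_monomial, if_pos rfl]
    · rw [coeff_monomial, if_neg]
      exact fun hc => hne (Finsupp.equivFunOnFinite.symm.injective hc)
  have hmul : (Nat.multinomial Finset.univ β : ℝ) ≠ 0 :=
    Nat.cast_ne_zero.2 (Nat.multinomial_pos _ _).ne'
  rw [hterm μ, hterm ν] at hcoeff
  exact mul_left_cancel₀ hmul hcoeff

/-- Polynomial integrals agree. -/
private lemma aux_poly_integral (μ ν : Measure (Fin d → ℝ))
    [IsFiniteMeasure μ] [IsFiniteMeasure ν]
    {K : Set (Fin d → ℝ)} (hK : IsCompact K) (hμK : μ Kᶜ = 0) (hνK : ν Kᶜ = 0)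
    (hmom : ∀ β : Fin d → ℕ, ∫ x, ∏ i, x i ^ β i ∂μ = ∫ x, ∏ i, x i ^ β i ∂ν)
    (p : MvPolynomial (Fin d) ℝ) :
    ∫ x, eval x p ∂μ = ∫ x, eval x p ∂ν := by
  have key : ∀ (μ' : Measure (Fin d → ℝ)) [IsFiniteMeasure μ'], μ' Kᶜ = 0 →
      ∫ x, eval x p ∂μ'
        = ∑ dd ∈ p.support, coeff dd p * ∫ x, ∏ i, x i ^ dd i ∂μ' := by
    intro μ' _ hμ'
    calc ∫ x, eval x p ∂μ'
        = ∫ x, ∑ dd ∈ p.support, coeff dd p * ∏ i, x i ^ dd i ∂μ' := by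
          simp_rw [eval_eq']
      _ = ∑ dd ∈ p.support, ∫ x, coeff dd p * ∏ i, x i ^ dd i ∂μ' :=
          integral_finset_sum _ fun dd _ =>
            (aux_integrable μ' hK hμ' (aux_cont_mon dd)).const_mul _
      _ = _ := Finset.sum_congr rfl fun dd _ => integral_const_mul _ _
  rw [key μ hμK, key ν hνK]
  exact Finset.sum_congr rfl fun dd _ => by rw [hmom dd]

private lemma aux_adjoin_poly {K : Set (Fin d → ℝ)}
    (c : Fin d → C(K, ℝ)) (hc : ∀ i (y : K), c i y = (y : Fin d → ℝ) i)
    (g : C(K, ℝ)) (hg : g ∈ Algebra.adjoin ℝ (Set.range c)) :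
    ∃ p : MvPolynomial (Fin d) ℝ, ∀ y : K, g y = eval (y : Fin d → ℝ) p := by
  induction hg using Algebra.adjoin_induction with
  | mem f hf =>
      obtain ⟨i, rfl⟩ := hf
      exact ⟨X i, fun y => by simp [hc]⟩
  | algebraMap r => exact ⟨C r, fun y => by simp⟩
  | add f₁ f₂ _ _ h₁ h₂ =>
      obtain ⟨p₁, hp₁⟩ := h₁; obtain ⟨p₂, hp₂⟩ := h₂
      exact ⟨p₁ + p₂, fun y => by simp [hp₁ y, hp₂ y]⟩
  | mul f₁ f₂ _ _ h₁ h₂ =>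
      obtain ⟨p₁, hp₁⟩ := h₁; obtain ⟨p₂, hp₂⟩ := h₂
      exact ⟨p₁ * p₂, fun y => by simp [hp₁ y, hp₂ y]⟩

/-- Stone–Weierstrass: integrals of continuous functions agree. -/
private lemma aux_cont_integral (μ ν : Measure (Fin d → ℝ))
    [IsProbabilityMeasure μ] [IsProbabilityMeasure ν]
    {K : Set (Fin d → ℝ)} (hK : IsCompact K) (hμK : μ Kᶜ = 0) (hνK : ν Kᶜ = 0)
    (hpoly : ∀ p : MvPolynomial (Fin d) ℝ, ∫ x, eval x p ∂μ = ∫ x, eval x p ∂ν)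
    (G : (Fin d → ℝ) → ℝ) (hG : Continuous G) : ∫ x, G x ∂μ = ∫ x, G x ∂ν := by
  haveI : CompactSpace ↥K := isCompact_iff_compactSpace.mp hK
  set c : Fin d → C(K, ℝ) :=
    fun i => ⟨fun y => (y : Fin d → ℝ) i, (continuous_apply i).comp continuous_subtype_val⟩
    with hc
  have hcapp : ∀ i (y : K), c i y = (y : Fin d → ℝ) i := fun i y => rfl
  set A := Algebra.adjoin ℝ (Set.range c) with hA
  have sep : A.SeparatesPoints := by
    intro x y hxy
    have : (x : Fin d → ℝ) ≠ (y : Fin d → ℝ) := fun hh => hxy (Subtype.ext hh)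
    obtain ⟨i, hi⟩ := Function.ne_iff.1 this
    exact ⟨c i, ⟨c i, Algebra.subset_adjoin ⟨i, rfl⟩, rfl⟩, hi⟩
  have key : ∀ ε : ℝ, 0 < ε → |∫ x, G x ∂μ - ∫ x, G x ∂ν| ≤ 2 * ε := by
    intro ε hε
    obtain ⟨g, hg⟩ := ContinuousMap.exists_mem_subalgebra_near_continuous_of_separatesPoints
      A sep (fun y : K => G y) (hG.comp continuous_subtype_val) ε hε
    obtain ⟨p, hp⟩ := aux_adjoin_poly c hcapp g g.2
    have hPcont : Continuous fun x : Fin d → ℝ => eval x p := MvPolynomial.continuous_eval p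
    have hbound : ∀ y ∈ K, |G y - eval y p| ≤ ε := by
      intro y hy
      have := hg ⟨y, hy⟩
      rw [hp ⟨y, hy⟩] at this
      rw [abs_sub_comm]
      exact le_of_lt (by simpa [Real.norm_eq_abs] using this)
    have hest : ∀ (μ' : Measure (Fin d → ℝ)) [IsProbabilityMeasure μ'], μ' Kᶜ = 0 →
        |∫ x, G x ∂μ' - ∫ x, eval x p ∂μ'| ≤ ε := by
      intro μ' _ hμ'
      rw [← integral_sub (aux_integrable μ' hK hμ' hG) (aux_integrable μ' hK hμ' hPcont)]
      calc |∫ x, (G x - eval x p) ∂μ'| ≤ ∫ x, |G x - eval x p| ∂μ' :=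
            by simpa [Real.norm_eq_abs] using
              norm_integral_le_integral_norm (fun x => G x - eval x p) (μ := μ')
        _ ≤ ∫ _x, ε ∂μ' := by
            refine integral_mono_ae
              (aux_integrable μ' hK hμ' (hG.sub hPcont)).abs (integrable_const ε) ?_
            filter_upwards [aux_ae_mem μ' hμ'] with x hx using hbound x hx
        _ = ε := by simp
    have h1 := hest μ hμK
    have h2 := hest ν hνK
    have h3 := hpoly p
    calc |∫ x, G x ∂μ - ∫ x, G x ∂ν|
        = |(∫ x, G x ∂μ - ∫ x, eval x p ∂μ) - (∫ x, G x ∂ν - ∫ x, eval x p ∂ν)| := by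
          rw [h3]; ring_nf
      _ ≤ |∫ x, G x ∂μ - ∫ x, eval x p ∂μ| + |∫ x, G x ∂ν - ∫ x, eval x p ∂ν| :=
          abs_sub _ _
      _ ≤ 2 * ε := by linarith
  by_contra hne
  have habs : 0 < |∫ x, G x ∂μ - ∫ x, G x ∂ν| := abs_pos.2 (sub_ne_zero.2 hne)
  have := key (|∫ x, G x ∂μ - ∫ x, G x ∂ν| / 4) (by linarith)
  linarith

private lemma aux_final (μ ν : Measure (Fin d → ℝ))
    [IsProbabilityMeasure μ] [IsProbabilityMeasure ν]
    (hcont : ∀ G : (Fin d → ℝ) → ℝ, Continuous G → ∫ x, G x ∂μ = ∫ x, G x ∂ν) :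
    μ = ν := by
  refine ext_of_forall_lintegral_eq_of_IsFiniteMeasure fun f => ?_
  have h1 := BoundedContinuousFunction.toReal_lintegral_coe_eq_integral f μ
  have h2 := BoundedContinuousFunction.toReal_lintegral_coe_eq_integral f ν
  have h3 : ∫ x, (f x : ℝ) ∂μ = ∫ x, (f x : ℝ) ∂ν :=
    hcont _ (NNReal.continuous_coe.comp f.continuous)
  have hfin1 : ∫⁻ x, (f x : ℝ≥0∞) ∂μ ≠ ⊤ := (f.lintegral_lt_top_of_nnreal μ).ne
  have hfin2 : ∫⁻ x, (f x : ℝ≥0∞) ∂ν ≠ ⊤ := (f.lintegral_lt_top_of_nnreal ν).ne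
  rw [← ENNReal.toReal_eq_toReal_iff' hfin1 hfin2]
  rw [h1, h2, h3]

end Aux

/-- Injectivity of the generalized Radon transform defined by odd-degree homogeneous
polynomials: if `m` is an odd positive integer and two compactly supported Borel probability
measures on `ℝ^d` have equal pushforwards under every homogeneous polynomial
`x ↦ ∑_{|α| = m} θ_α x^α` with unit coefficient vector `θ`, then the measures coincide.
Multi-indices `α` with `|α| = ∑ᵢ αᵢ = m` are enumerated by `Finset.Nat.antidiagonalTuple d m`. -/
theorem odd_polynomial_radon_injective (d m : ℕ) (hm_odd : Odd m) (hm_pos : 0 < m)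
    (μ ν : Measure (Fin d → ℝ))
    [IsProbabilityMeasure μ] [IsProbabilityMeasure ν]
    (hμc : ∃ K : Set (Fin d → ℝ), IsCompact K ∧ μ Kᶜ = 0)
    (hνc : ∃ K : Set (Fin d → ℝ), IsCompact K ∧ ν Kᶜ = 0)
    (h : ∀ θ : (Fin d → ℕ) → ℝ,
      ∑ α ∈ Finset.Nat.antidiagonalTuple d m, θ α ^ 2 = 1 →
      μ.map (fun x => ∑ α ∈ Finset.Nat.antidiagonalTuple d m, θ α * ∏ i, x i ^ α i)
        = ν.map (fun x => ∑ α ∈ Finset.Nat.antidiagonalTuple d m, θ α * ∏ i, x i ^ α i)) :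
    μ = ν := by
  obtain ⟨K₁, hK₁, hμK₁⟩ := hμc
  obtain ⟨K₂, hK₂, hνK₂⟩ := hνc
  set K := K₁ ∪ K₂ with hKdef
  have hK : IsCompact K := hK₁.union hK₂
  have hμK : μ Kᶜ = 0 :=
    measure_mono_null (Set.compl_subset_compl.2 Set.subset_union_left) hμK₁
  have hνK : ν Kᶜ = 0 :=
    measure_mono_null (Set.compl_subset_compl.2 Set.subset_union_right) hνK₂
  have hscale := aux_scale μ ν h
  have hpow := aux_pow_map μ ν hscale
  have hlin := aux_linear_map μ ν hm_odd hpow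
  have hlinmom := aux_lin_moment μ ν hlin
  have hmom := aux_monomial_moment μ ν hK hμK hνK hlinmom
  have hpoly := aux_poly_integral μ ν hK hμK hνK hmom
  have hcont := aux_cont_integral μ ν hK hμK hνK hpoly
  exact aux_final μ ν hcont
end
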